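/- arXiv:1506.02924 — 13 statements merged into one kernel-verified Lean document; each statement's English description precedes it below -/
import Mathlib

section
/- Let R be a ring with Jacobson radical J, and let M be a left R-module such that every submodule N of M is an RD-pure submodule (i.e., for every r ∈ R, rM ∩ N = rN). Then J • M = 0. -/
universe u v

/-- `N` is a pure submodule of `M`: every finite system of linear equations with
constant terms in `N` which is solvable in `M` is solvable in `N`
(equivalently, `- ⊗ N → - ⊗ M` stays injective). -/
def IsPureSubmodule (R : Type u) [Ring R] {M : Type v} [AddCommGroup M] [Module R M]
    (N : Submodule R M) : Prop :=
  ∀ (k l : ℕ) (a : Fin k → Fin l → R) (e : Fin k → N),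
    (∃ x : Fin l → M, ∀ i, ∑ j, a i j • x j = (e i : M)) →
    ∃ y : Fin l → N, ∀ i, ∑ j, a i j • (y j : M) = (e i : M)

/-- `N` is an RD-pure (relatively divisible) submodule of `M`: `rM ∩ N = rN` for all `r`. -/
def IsRDPureSubmodule (R : Type u) [Ring R] {M : Type v} [AddCommGroup M] [Module R M]
    (N : Submodule R M) : Prop :=
  ∀ (r : R) (n : M), n ∈ N → (∃ m : M, r • m = n) → ∃ n' ∈ N, r • n' = n

/-- `N` is an essential submodule of `M`. -/
def IsEssentialSubmodule (R : Type u) [Ring R] {M : Type v} [AddCommGroup M] [Module R M]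
    (N : Submodule R M) : Prop :=
  ∀ K : Submodule R M, K ⊓ N = ⊥ → K = ⊥

/-- `M` is a pure-essential extension of its submodule `N`. -/
def IsPureEssential (R : Type u) [Ring R] {M : Type v} [AddCommGroup M] [Module R M]
    (N : Submodule R M) : Prop :=
  IsPureSubmodule R N ∧ ∀ K : Submodule R M, K ≠ ⊥ → K ⊓ N = ⊥ →
    ¬ IsPureSubmodule R (N.map K.mkQ)

/-- `M` is an RD-essential extension of its submodule `N`. -/
def IsRDEssential (R : Type u) [Ring R] {M : Type v} [AddCommGroup M] [Module R M]
    (N : Submodule R M) : Prop :=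
  IsRDPureSubmodule R N ∧ ∀ K : Submodule R M, K ≠ ⊥ → K ⊓ N = ⊥ →
    ¬ IsRDPureSubmodule R (N.map K.mkQ)

/-- `M` is pure-injective: injective relative to pure monomorphisms. -/
def IsPureInjective (R : Type u) [Ring R] (M : Type v) [AddCommGroup M] [Module R M] : Prop :=
  ∀ (A B : Type v) [AddCommGroup A] [Module R A] [AddCommGroup B] [Module R B]
    (f : A →ₗ[R] B), Function.Injective f → IsPureSubmodule R (LinearMap.range f) →
    ∀ g : A →ₗ[R] M, ∃ h : B →ₗ[R] M, h ∘ₗ f = g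

/-- `M` is RD-injective: injective relative to RD-pure monomorphisms. -/
def IsRDInjective (R : Type u) [Ring R] (M : Type v) [AddCommGroup M] [Module R M] : Prop :=
  ∀ (A B : Type v) [AddCommGroup A] [Module R A] [AddCommGroup B] [Module R B]
    (f : A →ₗ[R] B), Function.Injective f → IsRDPureSubmodule R (LinearMap.range f) →
    ∀ g : A →ₗ[R] M, ∃ h : B →ₗ[R] M, h ∘ₗ f = g

/-- `Ext¹_R(F, M) = 0`, phrased as: every short exact sequence `0 → M → X → F → 0` splits. -/
def Ext1Vanishes (R : Type u) [Ring R] (F : Type v) [AddCommGroup F] [Module R F]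
    (M : Type v) [AddCommGroup M] [Module R M] : Prop :=
  ∀ (X : Type v) [AddCommGroup X] [Module R X] (i : M →ₗ[R] X) (p : X →ₗ[R] F),
    Function.Injective i → Function.Surjective p → LinearMap.ker p = LinearMap.range i →
    ∃ s : X →ₗ[R] M, s ∘ₗ i = LinearMap.id

/-- `M` is FP-injective: `Ext¹(F, M) = 0` for every finitely presented `F`. -/
def IsFPInjective (R : Type u) [Ring R] (M : Type v) [AddCommGroup M] [Module R M] : Prop :=
  ∀ (F : Type v) [AddCommGroup F] [Module R F], Module.FinitePresentation R F →
    Ext1Vanishes R F M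

/-- `M` is P-flat: `Tor₁(R/rR, M) = 0` for every `r`, i.e. `rm = 0` implies
`m ∈ (right annihilator of r) • M`. -/
def IsPFlat (R : Type u) [Ring R] (M : Type v) [AddCommGroup M] [Module R M] : Prop :=
  ∀ (r : R) (m : M), r • m = 0 →
    m ∈ Submodule.span R {x : M | ∃ s : R, ∃ y : M, r * s = 0 ∧ x = s • y}

/-- `M` is a flat left module (equational criterion of flatness, valid over any ring). -/
def IsFlatMod (R : Type u) [Ring R] (M : Type v) [AddCommGroup M] [Module R M] : Prop :=
  ∀ (k : ℕ) (a : Fin k → R) (x : Fin k → M), (∑ i, a i • x i) = 0 →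
    ∃ (l : ℕ) (b : Fin k → Fin l → R) (y : Fin l → M),
      (∀ i, x i = ∑ j, b i j • y j) ∧ ∀ j, (∑ i, a i * b i j) = 0

/-- `M` is semi-compact: every finitely solvable system of congruences
`x ≡ x_α (mod M[I_α])` has a simultaneous solution. -/
def IsSemiCompact (R : Type u) [Ring R] (M : Type v) [AddCommGroup M] [Module R M] : Prop :=
  ∀ (ι : Type v) (x : ι → M) (I : ι → Ideal R),
    (∀ s : Finset ι, ∃ m : M, ∀ i ∈ s, ∀ a ∈ I i, a • (m - x i) = 0) →
    ∃ m : M, ∀ i, ∀ a ∈ I i, a • (m - x i) = 0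
/-- If every submodule of `M` is RD-pure, then `J(R) • M = 0`. -/
theorem jacobson_smul_eq_zero_of_rd_regular (R : Type u) [Ring R]
    (M : Type v) [AddCommGroup M] [Module R M]
    (hreg : ∀ N : Submodule R M, IsRDPureSubmodule R N) :
    ∀ a ∈ Ideal.jacobson (⊥ : Ideal R), ∀ m : M, a • m = 0 := by
  intro a ha m
  obtain ⟨n', hn', heq⟩ := hreg (Submodule.span R {a • m}) a (a • m)
    (Submodule.subset_span rfl) ⟨m, rfl⟩
  obtain ⟨s, rfl⟩ := Submodule.mem_span_singleton.mp hn'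
  obtain ⟨z, hz⟩ := Ideal.mem_jacobson_iff.mp ha (-s)
  have hz0 : z * -s * a + z - 1 = 0 := by simpa using hz
  have h : z * -s * a + z = 1 := by rwa [sub_eq_zero] at hz0
  have h1 : z * s * a = z - 1 := by
    rw [eq_sub_iff_add_eq, ← h]; noncomm_ring
  have hinv : (1 + a * z * s) * (1 - a * s) = 1 := by
    have expand : (1 + a * z * s) * (1 - a * s)
        = 1 - a * s + a * z * s - a * (z * s * a) * s := by noncomm_ring
    rw [expand, h1]; noncomm_ring
  have key : (1 - a * s) • (a • m) = 0 := by
    rw [sub_smul, one_smul, mul_smul, heq, sub_self]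
  calc a • m = ((1 + a * z * s) * (1 - a * s)) • (a • m) := by rw [hinv, one_smul]
    _ = (1 + a * z * s) • ((1 - a * s) • (a • m)) := by rw [mul_smul]
    _ = 0 := by rw [key, smul_zero]
end

section
/- Let R be a semilocal ring (R modulo its Jacobson radical is semisimple) and let M be a left R-module all of whose submodules are RD-pure. Then M is a semisimple module. -/
universe u v

/-- Over a semilocal ring, a module all of whose submodules are RD-pure
is semisimple. -/
theorem isSemisimpleModule_of_rd_regular_of_semilocal (R : Type u) [Ring R]
    (hsemilocal : IsSemisimpleModule R (R ⧸ Ideal.jacobson (⊥ : Ideal R)))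
    (M : Type u) [AddCommGroup M] [Module R M]
    (hreg : ∀ N : Submodule R M, IsRDPureSubmodule R N) :
    IsSemisimpleModule R M := by
  classical
  set J := Ideal.jacobson (⊥ : Ideal R) with hJ
  -- Step 1: J kills M
  have hkill : ∀ r ∈ J, ∀ m : M, r • m = 0 := by
    intro r hr m
    obtain ⟨n', hn', hrn'⟩ := hreg (Submodule.span R {r • m}) r (r • m)
      (Submodule.mem_span_singleton_self _) ⟨m, rfl⟩
    obtain ⟨t, ht⟩ := Submodule.mem_span_singleton.mp hn'
    have key : r • m = (r * t) • (r • m) := by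
      rw [mul_smul, ht, hrn']
    obtain ⟨z, hz⟩ := Ideal.mem_jacobson_iff.mp hr (-t)
    rw [Ideal.mem_bot] at hz
    have hz1 : z * (-t) * r + z = 1 := sub_eq_zero.mp hz
    have hz' : z - z * t * r = 1 := by
      rw [← hz1, mul_neg, neg_mul]; abel
    have hw : (t * r) • (t • (r • m)) = t • (r • m) := by
      rw [mul_smul, ← mul_smul r t, ← key]
    have hw0 : t • (r • m) = 0 := by
      calc t • (r • m) = (z - z * t * r) • (t • (r • m)) := by rw [hz', one_smul]
        _ = z • (t • (r • m)) - (z * t * r) • (t • (r • m)) := by rw [sub_smul]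
        _ = z • (t • (r • m)) - z • ((t * r) • (t • (r • m))) := by
            rw [mul_assoc, mul_smul]
        _ = 0 := by rw [hw, sub_self]
    rw [key, mul_smul, hw0, smul_zero]
  haveI := hsemilocal
  -- Step 2: every cyclic submodule is semisimple (quotient of R ⧸ J)
  have hcyc : ∀ m : M, IsSemisimpleModule R (R ∙ m) := by
    intro m
    have h1 : J ≤ LinearMap.ker (LinearMap.toSpanSingleton R M m) := by
      intro r hr
      simpa [LinearMap.mem_ker] using hkill r hr m
    rw [LinearMap.span_singleton_eq_range,
      ← Submodule.range_liftQ J (LinearMap.toSpanSingleton R M m) h1]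
    exact .range _
  -- Step 3: M is the sup of its cyclic submodules
  refine isSemisimpleModule_of_isSemisimpleModule_submodule' (p := fun m : M => R ∙ m)
    hcyc ?_
  rw [eq_top_iff]
  intro x _
  exact (le_iSup (fun m : M => R ∙ m) x) (Submodule.mem_span_singleton_self x)
end

section
/- Let R be a commutative ring in which every prime ideal is maximal. Then for each maximal ideal P, the localization R_P is isomorphic as an R-algebra to R/0_P, where 0_P is the kernel of the localization map R → R_P. -/
universe u v

lemma exists_pow_mul_one_sub_eq_zero (R : Type u) [CommRing R]
    (hdim : ∀ Q : Ideal R, Q.IsPrime → Q.IsMaximal) (s : R) :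
    ∃ (b : R) (n : ℕ), s ^ n * (1 - b * s) = 0 := by
  classical
  set J : Ideal R := RingHom.ker (algebraMap R (Localization.Away s)) with hJdef
  have hJ : ∀ r, r ∈ J ↔ ∃ n : ℕ, s ^ n * r = 0 := by
    intro r
    rw [hJdef, RingHom.mem_ker, IsLocalization.map_eq_zero_iff (Submonoid.powers s)]
    constructor
    · rintro ⟨⟨m, n, rfl⟩, hm⟩; exact ⟨n, hm⟩
    · rintro ⟨n, hn⟩; exact ⟨⟨s ^ n, n, rfl⟩, hn⟩
  by_cases htop : J ⊔ Ideal.span {s} = ⊤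
  · have h1 : (1 : R) ∈ J ⊔ Ideal.span {s} := htop ▸ Submodule.mem_top
    obtain ⟨j, hj, c, hc, hjc⟩ := Submodule.mem_sup.mp h1
    obtain ⟨b, rfl⟩ := Ideal.mem_span_singleton'.mp hc
    obtain ⟨n, hn⟩ := (hJ j).mp hj
    exact ⟨b, n, by rw [show (1 : R) - b * s = j from (eq_sub_of_add_eq hjc).symm]; exact hn⟩
  · exfalso
    obtain ⟨Q, hQmax, hQ⟩ := Ideal.exists_le_maximal _ htop
    have hsQ : s ∈ Q := hQ (le_sup_right (α := Ideal R) (Ideal.mem_span_singleton_self s))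
    have hprime : Q.IsPrime := hQmax.isPrime
    have hnil : IsNilpotent (algebraMap R (Localization.AtPrime Q) s) := by
      rw [nilpotent_iff_mem_prime]
      intro p hp
      obtain ⟨hcp, hdisj⟩ :=
        (IsLocalization.isPrime_iff_isPrime_disjoint Q.primeCompl _ p).mp hp
      have hle : Ideal.comap (algebraMap R (Localization.AtPrime Q)) p ≤ Q := by
        intro x hx
        by_contra hxQ
        exact Set.disjoint_left.mp hdisj hxQ hx
      have heq : Ideal.comap (algebraMap R (Localization.AtPrime Q)) p = Q :=
        (hdim _ hcp).eq_of_le hQmax.ne_top hle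
      rw [← heq] at hsQ
      exact hsQ
    obtain ⟨n, hn⟩ := hnil
    rw [← map_pow, IsLocalization.map_eq_zero_iff Q.primeCompl] at hn
    obtain ⟨⟨t, ht⟩, htn⟩ := hn
    have : t ∈ J := (hJ t).mpr ⟨n, by rw [mul_comm]; exact htn⟩
    exact ht (hQ (le_sup_left (α := Ideal R) this))

/-- If every prime of `R` is maximal then `R_P ≅ R/0_P` as `R`-algebras,
where `0_P` is the kernel of `R → R_P`. -/
theorem localization_iso_quotient_ker_of_dim_zero (R : Type u) [CommRing R]
    (hdim : ∀ Q : Ideal R, Q.IsPrime → Q.IsMaximal)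
    (P : Ideal R) [P.IsMaximal] :
    Nonempty ((R ⧸ RingHom.ker (algebraMap R (Localization.AtPrime P))) ≃ₐ[R]
      Localization.AtPrime P) := by
  have hsurj : Function.Surjective (algebraMap R (Localization.AtPrime P)) := by
    intro z
    obtain ⟨⟨a, s⟩, rfl⟩ := IsLocalization.mk'_surjective P.primeCompl z
    obtain ⟨b, n, h⟩ := exists_pow_mul_one_sub_eq_zero R hdim s
    refine ⟨a * b, ?_⟩
    rw [eq_comm, IsLocalization.mk'_eq_iff_eq_mul, ← map_mul,
      IsLocalization.eq_iff_exists P.primeCompl]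
    refine ⟨⟨s ^ n, pow_mem s.2 n⟩, ?_⟩
    show s ^ n * a = s ^ n * (a * b * s)
    linear_combination a * h
  exact ⟨Ideal.quotientKerAlgEquivOfSurjective (f := Algebra.ofId R _) hsurj⟩
end

section
/- Let R be a commutative ring in which every prime ideal is maximal, and let C be a closed subset of Spec R. Then C = V(A) where A = ⋂_{P ∈ C} 0_P, and moreover A is a pure ideal of R (i.e., R/A is a flat R-module). -/
universe u v

section AuxPure

variable {R : Type u} [CommRing R]

/-- In a zero-dimensional ring, for any `f` in a prime `m` there is `s ∉ m`
with `s * f` nilpotent. -/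
lemma aux_nilfact (hdim : ∀ Q : Ideal R, Q.IsPrime → Q.IsMaximal)
    (m : Ideal R) (hm : m.IsPrime) {f : R} (hf : f ∈ m) :
    ∃ s ∉ m, IsNilpotent (s * f) := by
  by_contra hcon
  push_neg at hcon
  set T : Submonoid R :=
    { carrier := {x | ∃ s ∉ m, ∃ n : ℕ, x = s * f ^ n}
      mul_mem' := by
        rintro x y ⟨s, hs, n, rfl⟩ ⟨t, ht, k, rfl⟩
        exact ⟨s * t, fun h => ((hm.mem_or_mem h).elim hs ht), n + k, by ring⟩
      one_mem' := ⟨1, fun h => hm.ne_top ((Ideal.eq_top_iff_one m).mpr h), 0, by ring⟩ }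
    with hT
  have hdisj : Disjoint ((nilradical R : Ideal R) : Set R) (T : Set R) := by
    rw [Set.disjoint_left]
    rintro x hx ⟨s, hs, n, rfl⟩
    refine hcon s hs ?_
    rw [nilpotent_iff_mem_prime]
    intro J hJ
    have hx' : IsNilpotent (s * f ^ n) := hx
    have hmem := (nilpotent_iff_mem_prime.mp hx') J hJ
    rcases hJ.mem_or_mem hmem with h | h
    · exact J.mul_mem_right _ h
    · exact J.mul_mem_left _ (hJ.mem_of_pow_mem _ h)
  obtain ⟨p, hp, _, hpd⟩ := Ideal.exists_le_prime_disjoint (nilradical R) T hdisj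
  have hpm : p ≤ m := by
    intro x hxp
    by_contra hxm
    exact Set.disjoint_left.mp hpd hxp ⟨x, hxm, 0, by ring⟩
  have hfp : f ∉ p := fun h => Set.disjoint_left.mp hpd h
    ⟨1, fun h1 => hm.ne_top ((Ideal.eq_top_iff_one m).mpr h1), 1, by ring⟩
  have hpeq : p = m := (hdim p hp).eq_of_le hm.ne_top hpm
  exact hfp (hpeq ▸ hf)

/-- In a zero-dimensional ring, every element is "almost von Neumann regular". -/
lemma aux_vnr (hdim : ∀ Q : Ideal R, Q.IsPrime → Q.IsMaximal) (f : R) :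
    ∃ g : R, IsNilpotent (f - g * f ^ 2) := by
  set K : Ideal R := (nilradical R).colon (Ideal.span {f}) with hK
  have hKtop : Ideal.span {f} ⊔ K = ⊤ := by
    by_contra hne
    obtain ⟨m, hmmax, hle⟩ := Ideal.exists_le_maximal _ hne
    have hmp : m.IsPrime := hmmax.isPrime
    have hfm : f ∈ m := hle (le_sup_left (α := Ideal R) (Ideal.mem_span_singleton_self f))
    obtain ⟨s, hs, hnil⟩ := aux_nilfact hdim m hmp hfm
    have hsK : s ∈ K := Ideal.mem_colon_span_singleton.mpr (mem_nilradical.mpr hnil)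
    exact hs (hle (le_sup_right (α := Ideal R) hsK))
  obtain ⟨y, hy, z, hz, hyz⟩ :=
    Submodule.mem_sup.mp (hKtop ▸ Submodule.mem_top : (1 : R) ∈ Ideal.span {f} ⊔ K)
  obtain ⟨g, rfl⟩ := Ideal.mem_span_singleton'.mp hy
  refine ⟨g, ?_⟩
  have hz' : z * f ∈ nilradical R := Ideal.mem_colon_span_singleton.mp hz
  have heq : f - g * f ^ 2 = z * f := by linear_combination -f * hyz
  rw [heq]
  exact mem_nilradical.mp hz'

end AuxPure

/-- If every prime of `R` is maximal and `C ⊆ Spec R` is closed, then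
`C = V(A)` where `A = ⋂_{P ∈ C} 0_P`, and `A` is a pure ideal (`R/A` is flat). -/
theorem closed_eq_zeroLocus_inf_ker_and_pure (R : Type u) [CommRing R]
    (hdim : ∀ Q : Ideal R, Q.IsPrime → Q.IsMaximal)
    (C : Set (PrimeSpectrum R)) (hC : IsClosed C)
    (A : Ideal R)
    (hA : A = ⨅ P ∈ C, RingHom.ker (algebraMap R (Localization.AtPrime P.asIdeal))) :
    C = PrimeSpectrum.zeroLocus (A : Set R) ∧ Module.Flat R (R ⧸ A) := by
  obtain ⟨s, rfl⟩ := (PrimeSpectrum.isClosed_iff_zeroLocus C).mp hC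
  -- membership in A
  have hmemA : ∀ a, a ∈ A ↔ ∀ P ∈ PrimeSpectrum.zeroLocus s,
      a ∈ RingHom.ker (algebraMap R (Localization.AtPrime P.asIdeal)) := by
    intro a
    rw [hA]
    simp [Submodule.mem_iInf]
  -- Part 1 : C = V(A)
  have hC1 : PrimeSpectrum.zeroLocus s = PrimeSpectrum.zeroLocus (A : Set R) := by
    apply Set.Subset.antisymm
    · intro P hP
      rw [PrimeSpectrum.mem_zeroLocus]
      intro a ha
      have hk := (hmemA a).mp ha P hP
      rw [RingHom.mem_ker, IsLocalization.map_eq_zero_iff P.asIdeal.primeCompl] at hk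
      obtain ⟨t, hta⟩ := hk
      have : (t : R) * a ∈ P.asIdeal := by rw [hta]; exact zero_mem _
      exact (P.isPrime.mem_or_mem this).resolve_left t.2
    · intro Q hQ
      rw [PrimeSpectrum.mem_zeroLocus] at hQ
      intro f hf
      by_contra hfQ
      obtain ⟨g, hgn⟩ := aux_vnr hdim f
      set e := g * f with he
      have hnil2 : IsNilpotent (e - e ^ 2) := by
        have h : e - e ^ 2 = (f - g * f ^ 2) * g := by rw [he]; ring
        rw [h]
        exact (Commute.all _ _).isNilpotent_mul_right hgn
      obtain ⟨n, hn⟩ := hnil2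
      have key : e ^ (n + 1) ∈ A := by
        rw [hmemA]
        intro P hP
        rw [RingHom.mem_ker, IsLocalization.map_eq_zero_iff P.asIdeal.primeCompl]
        refine ⟨⟨(1 - e) ^ (n + 1), ?_⟩, ?_⟩
        · intro hmem
          have h1e : 1 - e ∈ P.asIdeal := P.isPrime.mem_of_pow_mem _ hmem
          have hfP : f ∈ P.asIdeal := (PrimeSpectrum.mem_zeroLocus _ _).mp hP hf
          have heP : e ∈ P.asIdeal := Ideal.mul_mem_left _ g hfP
          have hone : (1 : R) ∈ P.asIdeal := by
            have := Ideal.add_mem _ h1e heP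
            simpa using this
          exact P.isPrime.ne_top ((Ideal.eq_top_iff_one _).mpr hone)
        · show (1 - e) ^ (n + 1) * e ^ (n + 1) = 0
          rw [← mul_pow]
          have h2 : (1 - e) * e = e - e ^ 2 := by ring
          rw [h2, pow_succ, hn, zero_mul]
      have heQ : e ∈ Q.asIdeal := Q.isPrime.mem_of_pow_mem _ (hQ key)
      have hnu : f - g * f ^ 2 ∈ Q.asIdeal := by
        haveI := Q.isPrime
        exact nilradical_le_prime Q.asIdeal (mem_nilradical.mpr hgn)
      have hfin : f ∈ Q.asIdeal := by
        have hsum := Ideal.add_mem _ hnu (Ideal.mul_mem_left _ f heQ)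
        have heq2 : (f - g * f ^ 2) + f * e = f := by rw [he]; ring
        rwa [heq2] at hsum
      exact hfQ hfin
  -- Purity
  have hpure : ∀ a ∈ A, ∃ b ∈ A, a * b = a := by
    intro a ha
    by_cases htop : (⊥ : Ideal R).colon (Ideal.span {a}) ⊔ A = ⊤
    · obtain ⟨y, hy, b, hb, hyb⟩ :=
        Submodule.mem_sup.mp (htop ▸ Submodule.mem_top :
          (1 : R) ∈ (⊥ : Ideal R).colon (Ideal.span {a}) ⊔ A)
      refine ⟨b, hb, ?_⟩
      have hya : y * a = 0 := by
        have := Ideal.mem_colon_span_singleton.mp hy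
        simpa using this
      linear_combination a * hyb - hya
    · exfalso
      obtain ⟨m, hmmax, hle⟩ := Ideal.exists_le_maximal _ htop
      have hmp : m.IsPrime := hmmax.isPrime
      have hmC : (⟨m, hmp⟩ : PrimeSpectrum R) ∈ PrimeSpectrum.zeroLocus s := by
        rw [hC1]
        exact (PrimeSpectrum.mem_zeroLocus _ _).mpr
          (le_trans (le_sup_right (α := Ideal R)) hle)
      have hk := (hmemA a).mp ha _ hmC
      rw [RingHom.mem_ker, IsLocalization.map_eq_zero_iff m.primeCompl] at hk
      obtain ⟨t, hta⟩ := hk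
      have htm : (t : R) ∈ m := hle (le_sup_left (α := Ideal R)
        (Ideal.mem_colon_span_singleton.mpr (by simpa using hta)))
      exact t.2 htm
  refine ⟨hC1, ?_⟩
  -- Flatness of R ⧸ A
  rw [Module.Flat.iff_rTensor_injective']
  intro I
  rw [← LinearMap.ker_eq_bot, LinearMap.ker_eq_bot']
  intro z hz
  have hmk : ∀ r : R, r • (Ideal.Quotient.mk A (1 : R)) = Ideal.Quotient.mk A r := by
    intro r
    rw [Algebra.smul_def, Ideal.Quotient.algebraMap_eq, map_one, mul_one]
  have hrep : ∀ w : TensorProduct R I (R ⧸ A), ∃ i : I, w = i ⊗ₜ[R] (Ideal.Quotient.mk A 1) := by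
    intro w
    induction w using TensorProduct.induction_on with
    | zero => exact ⟨0, (TensorProduct.zero_tmul _ _).symm⟩
    | tmul i m =>
        obtain ⟨r, rfl⟩ := Ideal.Quotient.mk_surjective m
        refine ⟨r • i, ?_⟩
        rw [TensorProduct.smul_tmul, hmk r]
    | add x y hx hy =>
        obtain ⟨i, rfl⟩ := hx
        obtain ⟨j, rfl⟩ := hy
        exact ⟨i + j, (TensorProduct.add_tmul _ _ _).symm⟩
  obtain ⟨i, rfl⟩ := hrep z
  rw [LinearMap.rTensor_tmul] at hz
  have hi : (i : R) ∈ A := by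
    have h := congrArg (TensorProduct.lid R (R ⧸ A)) hz
    rw [map_zero, TensorProduct.lid_tmul] at h
    rw [hmk, Ideal.Quotient.eq_zero_iff_mem] at h
    simpa using h
  obtain ⟨b, hb, hba⟩ := hpure _ hi
  have h2 : (b • i : I) = i := Subtype.ext (by
    simp only [Submodule.coe_smul, smul_eq_mul]
    rw [mul_comm]; exact hba)
  calc (i : I) ⊗ₜ[R] (Ideal.Quotient.mk A 1)
      = (b • i : I) ⊗ₜ[R] (Ideal.Quotient.mk A (1:R)) := by rw [h2]
    _ = (i : I) ⊗ₜ[R] (b • Ideal.Quotient.mk A (1:R)) := by rw [TensorProduct.smul_tmul]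
    _ = (i : I) ⊗ₜ[R] (Ideal.Quotient.mk A b) := by rw [hmk]
    _ = (i : I) ⊗ₜ[R] 0 := by rw [Ideal.Quotient.eq_zero_iff_mem.mpr hb]
    _ = 0 := TensorProduct.tmul_zero _ _
end

section
/- Let R be a commutative ring in which every prime ideal is maximal. Then every pure ideal A of R is generated by idempotent elements. -/
universe u v

/-- Step 1: purity gives a = a * b with b ∈ A. -/
lemma aux_pure_mul {R : Type u} [CommRing R] (A : Ideal R) (hA : Module.Flat R (R ⧸ A))
    {a : R} (ha : a ∈ A) : ∃ b ∈ A, a = a * b := by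
  have hsm : a • (1 : R ⧸ A) = Ideal.Quotient.mk A a := by
    show a • (Submodule.Quotient.mk (1 : R) : R ⧸ A) = Submodule.Quotient.mk a
    rw [← Submodule.Quotient.mk_smul, smul_eq_mul, mul_one]
  have h : ∑ _i : PUnit.{u+1}, a • (1 : R ⧸ A) = 0 := by
    simp [hsm, Ideal.Quotient.eq_zero_iff_mem.mpr ha]
  obtain ⟨κ, c, y, h1, h2⟩ :=
    Module.Flat.isTrivialRelation_of_sum_smul_eq_zero (f := fun _ : PUnit.{u+1} => a)
      (x := fun _ : PUnit.{u+1} => (1 : R ⧸ A)) h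
  choose Y hY using fun j => Ideal.Quotient.mk_surjective (y j)
  refine ⟨1 - ∑ j, c PUnit.unit j * Y j, ?_, ?_⟩
  · rw [← Ideal.Quotient.eq_zero_iff_mem]
    have : (Ideal.Quotient.mk A) (∑ j, c PUnit.unit j * Y j) = 1 := by
      rw [map_sum]
      rw [show (1 : R ⧸ A) = ∑ j, c PUnit.unit j • y j from h1 PUnit.unit]
      exact Finset.sum_congr rfl fun j _ => by rw [map_mul, hY j]; rfl
    simp [this]
  · have h2' : ∀ j, a * c PUnit.unit j = 0 := by
      intro j
      have := h2 j
      simpa using this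
    rw [mul_sub, mul_one, Finset.mul_sum]
    have : ∑ j, a * (c PUnit.unit j * Y j) = 0 := by
      refine Finset.sum_eq_zero fun j _ => by rw [← mul_assoc, h2' j, zero_mul]
    rw [this, sub_zero]

/-- Step 2: π-regularity in zero-dimensional rings. -/
lemma aux_pi_regular {R : Type u} [CommRing R]
    (hdim : ∀ Q : Ideal R, Q.IsPrime → Q.IsMaximal) (x : R) :
    ∃ (n : ℕ) (r : R), x ^ (n + 1) = x ^ (n + 2) * r := by
  by_contra h'
  push_neg at h'
  set S : Submonoid R :=
    { carrier := {s | ∃ (n : ℕ) (r : R), s = x ^ n * (1 - x * r)}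
      mul_mem' := by
        rintro s t ⟨n, r, rfl⟩ ⟨m, u, rfl⟩
        exact ⟨n + m, r + u - x * r * u, by ring⟩
      one_mem' := ⟨0, 0, by ring⟩ } with hS
  have hdisj : Disjoint ((⊥ : Ideal R) : Set R) (S : Set R) := by
    rw [Set.disjoint_left]
    rintro z hz ⟨n, r, rfl⟩
    simp only [SetLike.mem_coe, Ideal.mem_bot] at hz
    apply h' n r
    have : x * (x ^ n * (1 - x * r)) = 0 := by rw [hz, mul_zero]
    have e : x ^ (n + 1) - x ^ (n + 2) * r = 0 := by rw [← this]; ring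
    exact sub_eq_zero.mp e
  obtain ⟨p, hp, -, hpS⟩ := Ideal.exists_le_prime_disjoint ⊥ S hdisj
  have hmax := hdim p hp
  have hxp : x ∉ p := fun hx =>
    Set.disjoint_left.mp hpS hx ⟨1, 0, by ring⟩
  obtain ⟨v, i, hi, hvi⟩ := hmax.exists_inv hxp
  have : (1 - x * v) ∈ p := by
    have : 1 - x * v = i := by rw [← hvi]; ring
    rwa [this]
  exact Set.disjoint_left.mp hpS this ⟨0, v, by ring⟩

/-- If every prime of `R` is maximal then every pure ideal of `R`
is generated by idempotents. -/
theorem pure_ideal_generated_by_idempotents (R : Type u) [CommRing R]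
    (hdim : ∀ Q : Ideal R, Q.IsPrime → Q.IsMaximal)
    (A : Ideal R) (hA : Module.Flat R (R ⧸ A)) :
    A = Ideal.span {e : R | e ∈ A ∧ IsIdempotentElem e} := by
  refine le_antisymm ?_ (Ideal.span_le.mpr fun e he => he.1)
  intro a ha
  obtain ⟨b, hb, hab⟩ := aux_pure_mul A hA ha
  obtain ⟨n, r, hnr⟩ := aux_pi_regular hdim b
  set e := b ^ (n + 1) * r ^ (n + 1) with he
  have key : ∀ k : ℕ, b ^ (n + 1) = b ^ (n + 1) * (b * r) ^ k := by
    intro k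
    induction k with
    | zero => simp
    | succ k ih =>
      refine Eq.symm ?_
      calc b ^ (n + 1) * (b * r) ^ (k + 1)
          = (b ^ (n + 2) * r) * (b * r) ^ k := by ring
        _ = b ^ (n + 1) * (b * r) ^ k := by rw [← hnr]
        _ = b ^ (n + 1) := ih.symm
  have he' : e = (b * r) ^ (n + 1) := by rw [he, mul_pow]
  have hbe : b ^ (n + 1) * e = b ^ (n + 1) := by
    rw [he']; exact (key (n + 1)).symm
  have hee : IsIdempotentElem e := by
    show e * e = e
    calc e * e = r ^ (n + 1) * (b ^ (n + 1) * (b * r) ^ (n + 1)) := by rw [he']; ring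
      _ = r ^ (n + 1) * b ^ (n + 1) := by rw [← key (n + 1)]
      _ = e := by rw [he']; ring
  have heA : e ∈ A := by
    have : e = ((b * r) ^ n * r) * b := by rw [he]; ring
    rw [this]
    exact Ideal.mul_mem_left A _ hb
  have habk : ∀ k : ℕ, a = a * b ^ k := by
    intro k
    induction k with
    | zero => simp
    | succ k ih =>
      calc a = a * b := hab
        _ = (a * b ^ k) * b := by rw [← ih]
        _ = a * b ^ (k + 1) := by ring
  have hae : a = a * e := by
    calc a = a * b ^ (n + 1) := habk (n + 1)
      _ = a * (b ^ (n + 1) * e) := by rw [hbe]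
      _ = (a * b ^ (n + 1)) * e := by ring
      _ = a * e := by rw [← habk (n + 1)]
  rw [hae]
  exact Ideal.mul_mem_left _ a (Ideal.subset_span ⟨heA, hee⟩)
end

section
/- Let R be a commutative ring and S a multiplicative subset of R. If A → B is a pure-essential extension of S⁻¹R-modules, and C is an R-submodule of B with A ∩ C = 0 and A pure in B/C, then S⁻¹C-localization of C is zero implies C = 0; consequently, if every pure-essential extension of R-modules is essential, then every pure-essential extension of S⁻¹R-modules is essential. -/
universe u v

set_option linter.unusedSectionVars false

section Key

variable {R : Type u} [CommRing R] (S : Submonoid R)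
variable {M : Type u} [AddCommGroup M] [Module (Localization S) M]
  [Module R M] [IsScalarTower R (Localization S) M]

lemma unit_smul_cancel {c : Localization S} (hc : IsUnit c) {x y : M}
    (h : c • x = c • y) : x = y := by
  obtain ⟨u, rfl⟩ := hc
  have := congrArg (fun z => ((u⁻¹ : (Localization S)ˣ) : Localization S) • z) h
  simpa [smul_smul] using this

lemma s_smul_eq_zero {s : S} {x : M} (h : (s : R) • x = 0) : x = 0 := by
  have h' : (algebraMap R (Localization S) (s : R)) • x
      = (algebraMap R (Localization S) (s : R)) • (0 : M) := by
    rw [algebraMap_smul, smul_zero, h]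
  exact unit_smul_cancel S (IsLocalization.map_units (Localization S) s) h'

theorem key (N : Submodule (Localization S) M) (h : IsPureEssential (Localization S) N) :
    IsPureEssential R (N.restrictScalars R) := by
  obtain ⟨hp, he⟩ := h
  constructor
  · intro k l a e ⟨x, hx⟩
    obtain ⟨y, hy⟩ := hp k l (fun i j => algebraMap R (Localization S) (a i j))
      (fun i => ⟨(e i : M), (e i).2⟩)
      ⟨x, fun i => by simpa [algebraMap_smul] using hx i⟩
    exact ⟨fun j => ⟨(y j : M), (y j).2⟩, fun i => by simpa [algebraMap_smul] using hy i⟩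
  · intro K₀ hK₀ne hK₀inf hpure
    set K' : Submodule (Localization S) M :=
      { carrier := {x : M | ∃ s : S, (s : R) • x ∈ K₀}
        zero_mem' := ⟨1, by simp⟩
        add_mem' := by
          rintro x y ⟨s, hs⟩ ⟨t, ht⟩
          refine ⟨s * t, ?_⟩
          have hc : ((↑(s * t) : R)) • (x + y)
              = (t : R) • ((s : R) • x) + (s : R) • ((t : R) • y) := by
            rw [Submonoid.coe_mul, smul_add, mul_comm (s : R) (t : R), mul_smul,
              mul_comm (t : R) (s : R), mul_smul]
          rw [hc]
          exact K₀.add_mem (K₀.smul_mem _ hs) (K₀.smul_mem _ ht)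
        smul_mem' := by
          rintro c x ⟨s, hs⟩
          obtain ⟨⟨r, u⟩, hru⟩ := IsLocalization.surj S c
          refine ⟨s * u, ?_⟩
          have h1 : (u : R) • (c • x) = r • x := by
            rw [← algebraMap_smul (Localization S) (u : R) (c • x), smul_smul,
              mul_comm, hru, algebraMap_smul]
          have h2 : ((↑(s * u) : R)) • (c • x) = r • ((s : R) • x) := by
            rw [Submonoid.coe_mul, mul_smul, h1, smul_comm]
          rw [h2]
          exact K₀.smul_mem _ hs } with hK'def
    have memK' : ∀ x : M, x ∈ K' ↔ ∃ s : S, (s : R) • x ∈ K₀ := fun x => Iff.rfl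
    have hK₀le : ∀ x ∈ K₀, x ∈ K' := fun x hx => ⟨1, by simpa using hx⟩
    have hK'ne : K' ≠ ⊥ := by
      obtain ⟨x, hx, hx0⟩ := (Submodule.ne_bot_iff K₀).mp hK₀ne
      exact (Submodule.ne_bot_iff K').mpr ⟨x, hK₀le x hx, hx0⟩
    have hK'inf : K' ⊓ N = ⊥ := by
      rw [Submodule.eq_bot_iff]
      rintro x ⟨⟨s, hs⟩, hN⟩
      have hsN : (s : R) • x ∈ N.restrictScalars R := by
        show (s : R) • x ∈ N
        rw [← algebraMap_smul (Localization S) (s : R) x]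
        exact N.smul_mem _ hN
      have hb : (s : R) • x ∈ K₀ ⊓ N.restrictScalars R := ⟨hs, hsN⟩
      rw [hK₀inf] at hb
      exact s_smul_eq_zero S hb
    refine he K' hK'ne hK'inf ?_
    intro k l a e ⟨x, hx⟩
    -- clear denominators
    obtain ⟨s, hs⟩ := IsLocalization.exist_integer_multiples_of_finite S
      (fun p : Fin k × Fin l => a p.1 p.2)
    have hs' : ∀ i j, ∃ r : R, algebraMap R (Localization S) r
        = algebraMap R (Localization S) (s : R) * a i j := by
      intro i j
      obtain ⟨r, hr⟩ := hs (i, j)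
      exact ⟨r, by rw [hr, Algebra.smul_def]⟩
    choose r hr using fun i => fun j => hs' i j
    -- lifts
    choose n hnN hn using fun i => (e i).2
    choose m hm using fun j => Submodule.mkQ_surjective K' (x j)
    -- difference lies in K'
    have hd : ∀ i, ((∑ j, r i j • m j) - (s : R) • n i) ∈ K' := by
      intro i
      rw [← Submodule.Quotient.mk_eq_zero K']
      show K'.mkQ ((∑ j, r i j • m j) - (s : R) • n i) = 0
      have e1 : (∑ j, r i j • m j) - (s : R) • n i
          = (∑ j, algebraMap R (Localization S) (r i j) • m j)
            - algebraMap R (Localization S) (s : R) • n i := by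
        simp [algebraMap_smul]
      rw [e1, map_sub, map_sum, sub_eq_zero]
      simp only [map_smul, hm, hn]
      calc (∑ j, algebraMap R (Localization S) (r i j) • x j)
          = ∑ j, algebraMap R (Localization S) (s : R) • (a i j • x j) := by
            refine Finset.sum_congr rfl fun j _ => ?_
            rw [hr i j, mul_smul]
        _ = algebraMap R (Localization S) (s : R) • ((e i : M ⧸ K')) := by
            rw [← Finset.smul_sum, hx i]
    choose t ht using fun i => (memK' _).mp (hd i)
    set T : S := ∏ i, t i with hT
    have hTd : ∀ i, (T : R) • ((∑ j, r i j • m j) - (s : R) • n i) ∈ K₀ := by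
      intro i
      have hTe : (T : R) = (∏ j ∈ Finset.univ.erase i, (t j : R)) * (t i : R) := by
        rw [hT, ← Finset.prod_erase_mul _ _ (Finset.mem_univ i)]
        push_cast
        rfl
      rw [hTe, mul_smul]
      exact K₀.smul_mem _ (ht i)
    -- the R-linear system in M ⧸ K₀
    have hEmem : ∀ i, K₀.mkQ (((T : R) * (s : R)) • n i)
        ∈ (N.restrictScalars R).map K₀.mkQ := by
      intro i
      refine ⟨((T : R) * (s : R)) • n i, ?_, rfl⟩
      show ((T : R) * (s : R)) • n i ∈ N
      rw [← algebraMap_smul (Localization S) ((T : R) * (s : R)) (n i)]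
      exact N.smul_mem _ (hnN i)
    have hsolv : ∀ i, ∑ j, r i j • K₀.mkQ ((T : R) • m j)
        = K₀.mkQ (((T : R) * (s : R)) • n i) := by
      intro i
      have hsum : (T : R) • ((∑ j, r i j • m j) - (s : R) • n i)
          + ((T : R) * (s : R)) • n i = ∑ j, r i j • ((T : R) • m j) := by
        rw [smul_sub, mul_smul, sub_add_cancel, Finset.smul_sum]
        exact Finset.sum_congr rfl fun j _ => smul_comm _ _ _
      have h0 : K₀.mkQ ((T : R) • ((∑ j, r i j • m j) - (s : R) • n i)) = 0 := by
        rw [Submodule.mkQ_apply, Submodule.Quotient.mk_eq_zero]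
        exact hTd i
      calc ∑ j, r i j • K₀.mkQ ((T : R) • m j)
          = K₀.mkQ (∑ j, r i j • ((T : R) • m j)) := by
            simp only [map_sum, map_smul]
        _ = K₀.mkQ ((T : R) • ((∑ j, r i j • m j) - (s : R) • n i))
            + K₀.mkQ (((T : R) * (s : R)) • n i) := by
            rw [← map_add, hsum]
        _ = K₀.mkQ (((T : R) * (s : R)) • n i) := by rw [h0, zero_add]
    obtain ⟨y, hy⟩ := hpure k l r (fun i => ⟨_, hEmem i⟩)
      ⟨fun j => K₀.mkQ ((T : R) • m j), hsolv⟩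
    choose w hwN hw using fun j => (y j).2
    have hker : ∀ i, (∑ j, r i j • w j) - ((T : R) * (s : R)) • n i ∈ K₀ := by
      intro i
      rw [← Submodule.Quotient.mk_eq_zero K₀]
      show K₀.mkQ ((∑ j, r i j • w j) - ((T : R) * (s : R)) • n i) = 0
      rw [map_sub, map_sum, sub_eq_zero]
      simp only [map_smul, hw]
      exact hy i
    have hK'eq : ∀ i, K'.mkQ (∑ j, r i j • w j)
        = K'.mkQ (((T : R) * (s : R)) • n i) := by
      intro i
      rw [← sub_eq_zero, ← map_sub, Submodule.mkQ_apply, Submodule.Quotient.mk_eq_zero]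
      exact hK₀le _ (hker i)
    have hfinal : ∀ i, ∑ j, a i j • K'.mkQ (w j)
        = algebraMap R (Localization S) (T : R) • (e i : M ⧸ K') := by
      intro i
      refine unit_smul_cancel S (IsLocalization.map_units (Localization S) s) ?_
      calc algebraMap R (Localization S) (s : R) • ∑ j, a i j • K'.mkQ (w j)
          = ∑ j, (algebraMap R (Localization S) (s : R) * a i j) • K'.mkQ (w j) := by
            rw [Finset.smul_sum]
            exact Finset.sum_congr rfl fun j _ => (mul_smul _ _ _).symm
        _ = ∑ j, algebraMap R (Localization S) (r i j) • K'.mkQ (w j) := by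
            exact Finset.sum_congr rfl fun j _ => by rw [hr i j]
        _ = K'.mkQ (∑ j, r i j • w j) := by
            rw [map_sum]
            exact Finset.sum_congr rfl fun j _ => by
              rw [← map_smul, algebraMap_smul]
        _ = K'.mkQ (((T : R) * (s : R)) • n i) := hK'eq i
        _ = algebraMap R (Localization S) (s : R)
            • (algebraMap R (Localization S) (T : R) • (e i : M ⧸ K')) := by
            rw [← algebraMap_smul (Localization S) ((T : R) * (s : R)) (n i),
              map_smul, hn i, map_mul, mul_comm, mul_smul]
    obtain ⟨uT, huT⟩ := IsLocalization.map_units (Localization S) T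
    refine ⟨fun j => ⟨((uT⁻¹ : (Localization S)ˣ) : Localization S) • K'.mkQ (w j),
      Submodule.smul_mem _ _ ⟨w j, hwN j, rfl⟩⟩, fun i => ?_⟩
    show ∑ j, a i j • (((uT⁻¹ : (Localization S)ˣ) : Localization S) • K'.mkQ (w j))
        = (e i : M ⧸ K')
    calc ∑ j, a i j • (((uT⁻¹ : (Localization S)ˣ) : Localization S) • K'.mkQ (w j))
        = ((uT⁻¹ : (Localization S)ˣ) : Localization S) • ∑ j, a i j • K'.mkQ (w j) := by
          rw [Finset.smul_sum]
          exact Finset.sum_congr rfl fun j _ => smul_comm _ _ _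
      _ = ((uT⁻¹ : (Localization S)ˣ) : Localization S)
          • ((uT : Localization S) • (e i : M ⧸ K')) := by rw [hfinal i, huT]
      _ = (e i : M ⧸ K') := by rw [smul_smul, Units.inv_mul, one_smul]

end Key

/-- For a multiplicative subset `S` of `R`: if `A ⊆ B` is a pure-essential
extension of `S⁻¹R`-modules and `C` is an `R`-submodule of `B` with `A ∩ C = 0` and `A`
pure in `B/C` (over `R`), then `S⁻¹C = 0` implies `C = 0`; consequently, if every
pure-essential extension of `R`-modules is essential, then every pure-essential extension
of `S⁻¹R`-modules is essential. -/
theorem pure_essential_localization (R : Type u) [CommRing R] (S : Submonoid R) :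
    (∀ (B : Type u) [AddCommGroup B] [Module (Localization S) B]
      [Module R B] [IsScalarTower R (Localization S) B]
      (A : Submodule (Localization S) B), IsPureEssential (Localization S) A →
      ∀ C : Submodule R B, (A.restrictScalars R) ⊓ C = ⊥ →
        IsPureSubmodule R ((A.restrictScalars R).map C.mkQ) →
        Submodule.span (Localization S) (C : Set B) = ⊥ → C = ⊥) ∧
    ((∀ (M : Type u) [AddCommGroup M] [Module R M] (N : Submodule R M),
        IsPureEssential R N → IsEssentialSubmodule R N) →
      ∀ (M : Type u) [AddCommGroup M] [Module (Localization S) M]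
        (N : Submodule (Localization S) M),
        IsPureEssential (Localization S) N → IsEssentialSubmodule (Localization S) N) := by
  constructor
  · intro B _ _ _ _ A hA C hinf hpure hspan
    rw [Submodule.eq_bot_iff]
    intro x hx
    have hx' : x ∈ Submodule.span (Localization S) (C : Set B) := Submodule.subset_span hx
    rw [hspan] at hx'
    simpa using hx'
  · intro H M _ _ N hN
    letI : Module R M := Module.compHom M (algebraMap R (Localization S))
    haveI : IsScalarTower R (Localization S) M := ⟨fun r c m => by
      show (r • c) • m = algebraMap R (Localization S) r • (c • m)
      rw [Algebra.smul_def, mul_smul]⟩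
    have hkey : IsPureEssential R (N.restrictScalars R) := key S N hN
    have hEss := H M (N.restrictScalars R) hkey
    intro K hKN
    have hinf : K.restrictScalars R ⊓ N.restrictScalars R = ⊥ := by
      rw [Submodule.eq_bot_iff]
      rintro x ⟨h1, h2⟩
      have hx : x ∈ K ⊓ N := ⟨h1, h2⟩
      rw [hKN] at hx
      simpa using hx
    have hb := hEss (K.restrictScalars R) hinf
    rw [Submodule.eq_bot_iff] at hb ⊢
    exact fun x hx => hb x hx
end

section
/- Let R be a ring, E an FP-injective left R-module, and U a pure submodule of E. If H is an injective hull of E, then E/U is a pure submodule of H/U; consequently, if H/U being a quotient of an injective by an FP-injectively-embedded pure submodule is FP-injective, then E/U is FP-injective. -/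
universe u v

section AuxLemmas
variable {R : Type u} [Ring R]

/-- The linear map `(Fin n → R) → M` sending `v` to `∑ v i • c i`. -/
def combo {n : ℕ} {M : Type u} [AddCommGroup M] [Module R M] (c : Fin n → M) :
    (Fin n → R) →ₗ[R] M where
  toFun v := ∑ i, v i • c i
  map_add' v w := by simp [add_smul, Finset.sum_add_distrib]
  map_smul' r v := by simp [Finset.smul_sum, mul_smul]

@[simp] lemma combo_apply {n : ℕ} {M : Type u} [AddCommGroup M] [Module R M]
    (c : Fin n → M) (v : Fin n → R) : combo c v = ∑ i, v i • c i := rfl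

lemma combo_single {n : ℕ} {M : Type u} [AddCommGroup M] [Module R M]
    (c : Fin n → M) (i : Fin n) : combo c (Pi.single i (1:R)) = c i := by
  simp [combo_apply, Pi.single_apply, ite_smul]

lemma sum_single_smul {n : ℕ} (v : Fin n → R) :
    ∑ j, v j • (Pi.single j 1 : Fin n → R) = v := by
  ext j'
  simp [Finset.sum_apply, Pi.single_apply]

lemma factor_through_surjective {A B C : Type u} [AddCommGroup A] [Module R A]
    [AddCommGroup B] [Module R B] [AddCommGroup C] [Module R C]
    (π : A →ₗ[R] B) (f : A →ₗ[R] C) (hπ : Function.Surjective π)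
    (h : LinearMap.ker π ≤ LinearMap.ker f) : ∃ g : B →ₗ[R] C, g ∘ₗ π = f := by
  refine ⟨((LinearMap.ker π).liftQ f h) ∘ₗ (π.quotKerEquivOfSurjective hπ).symm.toLinearMap, ?_⟩
  ext a
  have h1 : (π.quotKerEquivOfSurjective hπ).symm (π a) = Submodule.Quotient.mk a := by
    apply (π.quotKerEquivOfSurjective hπ).injective
    rw [LinearEquiv.apply_symm_apply]
    simp [LinearMap.quotKerEquivOfSurjective, LinearEquiv.trans_apply]
  simp [h1]

theorem fpInjective_range_pure {E H : Type u} [AddCommGroup E] [Module R E]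
    [AddCommGroup H] [Module R H] (hE : IsFPInjective R E) (j : E →ₗ[R] H)
    (hj : Function.Injective j) : IsPureSubmodule R (LinearMap.range j) := by
  classical
  rintro k l a e ⟨x, hx⟩
  choose c hc using fun i => (e i).2
  -- the matrix map
  set α : (Fin k → R) →ₗ[R] (Fin l → R) := combo (fun i => a i) with hα
  set g : (Fin k → R) →ₗ[R] E := combo c with hg
  set β : (Fin l → R) →ₗ[R] H := combo x with hβ
  have hkey : j ∘ₗ g = β ∘ₗ α := by
    apply LinearMap.ext; intro v
    have hcx : ∀ i, j (c i) = ∑ j', a i j' • x j' := fun i => (hc i).trans (hx i).symm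
    simp only [LinearMap.comp_apply, hg, hβ, hα, combo_apply, map_sum, map_smul]
    simp only [hcx, Finset.smul_sum, smul_smul]
  have hker : LinearMap.ker α ≤ LinearMap.ker g := by
    intro v hv
    have : j (g v) = 0 := by
      rw [← LinearMap.comp_apply, hkey, LinearMap.comp_apply,
        LinearMap.mem_ker.mp hv, map_zero]
    simpa [LinearMap.mem_ker] using hj (by simpa using this)
  set A := LinearMap.range α with hA
  -- factor g through the image of α
  obtain ⟨h, hh⟩ := factor_through_surjective α.rangeRestrict g
    α.surjective_rangeRestrict (by rwa [LinearMap.ker_rangeRestrict])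
  -- F := R^l / A is finitely presented
  have hAfg : A.FG := by
    rw [hA, LinearMap.range_eq_map]
    exact (Module.finite_def.mp inferInstance).map α
  haveI : Module.FinitePresentation R ((Fin l → R) ⧸ A) :=
    Module.finitePresentation_of_surjective A.mkQ A.mkQ_surjective
      (by rwa [Submodule.ker_mkQ])
  -- pushout
  set φ : A →ₗ[R] E × (Fin l → R) := LinearMap.prod (-h) A.subtype with hφ
  set W := LinearMap.range φ with hW
  set iE : E →ₗ[R] (E × (Fin l → R)) ⧸ W := W.mkQ ∘ₗ LinearMap.inl R E (Fin l → R) with hiE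
  have hin : Function.Injective iE := by
    rw [hiE]
    refine (injective_iff_map_eq_zero _).mpr fun m hm => ?_
    have : ((m, 0) : E × (Fin l → R)) ∈ W := by
      simpa [Submodule.Quotient.mk_eq_zero] using hm
    obtain ⟨w, hw⟩ := this
    have hw2 : (w : Fin l → R) = 0 := congrArg Prod.snd hw
    have hw0 : w = 0 := Subtype.ext hw2
    have := congrArg Prod.fst hw
    simp [hφ, hw0] at this
    exact this.symm
  set pF : ((E × (Fin l → R)) ⧸ W) →ₗ[R] (Fin l → R) ⧸ A :=
    W.liftQ (A.mkQ ∘ₗ LinearMap.snd R E (Fin l → R)) (by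
      rintro z ⟨w, rfl⟩
      simp [hφ, Submodule.Quotient.mk_eq_zero]) with hpF
  have hsurj : Function.Surjective pF := fun z => by
    obtain ⟨v, rfl⟩ := A.mkQ_surjective z
    exact ⟨Submodule.Quotient.mk (0, v), by simp [hpF]⟩
  have hkerpf : LinearMap.ker pF = LinearMap.range iE := by
    ext z
    obtain ⟨⟨m, v⟩, rfl⟩ := W.mkQ_surjective z
    simp only [LinearMap.mem_ker, LinearMap.mem_range]
    constructor
    · intro hz
      have hv : v ∈ A := by
        simpa [hpF, Submodule.Quotient.mk_eq_zero] using hz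
      refine ⟨m + h ⟨v, hv⟩, ?_⟩
      rw [hiE]
      simp only [LinearMap.comp_apply, LinearMap.inl_apply, Submodule.mkQ_apply]
      rw [Submodule.Quotient.eq]
      exact ⟨-⟨v, hv⟩, by simp [hφ]⟩
    · rintro ⟨m', hm'⟩
      rw [← hm']
      simp only [hiE, LinearMap.comp_apply, LinearMap.inl_apply, Submodule.mkQ_apply, hpF,
        Submodule.liftQ_apply, LinearMap.snd_apply]
      simp [Submodule.Quotient.mk_eq_zero]
  obtain ⟨s, hs⟩ := hE ((Fin l → R) ⧸ A) inferInstance ((E × (Fin l → R)) ⧸ W)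
    iE pF hin hsurj hkerpf
  set e' : (Fin l → R) →ₗ[R] E := s ∘ₗ W.mkQ ∘ₗ LinearMap.inr R E (Fin l → R) with he'
  have hext : ∀ w : A, e' (w : Fin l → R) = h w := by
    intro w
    have h1 : W.mkQ (0, (w : Fin l → R)) - W.mkQ (h w, 0) = W.mkQ (φ w) := by
      rw [← map_sub]
      congr 1
      simp [hφ]
    have h2 : W.mkQ (φ w) = 0 := by simp [Submodule.Quotient.mk_eq_zero, hW]
    have h3 : W.mkQ (0, (w : Fin l → R)) = iE (h w) := by
      have := h1.trans h2
      rw [sub_eq_zero] at this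
      simpa [hiE] using this
    calc e' (w : Fin l → R) = s (W.mkQ (0, (w : Fin l → R))) := rfl
      _ = s (iE (h w)) := by rw [h3]
      _ = h w := by rw [← LinearMap.comp_apply, hs]; rfl
  refine ⟨fun j' => ⟨j (e' (Pi.single j' (1:R))), ⟨_, rfl⟩⟩, fun i => ?_⟩
  have hrr : (α.rangeRestrict (Pi.single i (1:R)) : Fin l → R) = a i := by
    change α (Pi.single i (1:R)) = a i
    rw [hα, combo_single]
  calc ∑ j', a i j' • j (e' (Pi.single j' (1:R)))
      = j (e' (∑ j', a i j' • (Pi.single j' 1 : Fin l → R))) := by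
        simp [map_sum, map_smul]
    _ = j (e' (a i)) := by rw [sum_single_smul]
    _ = j (e' ((α.rangeRestrict (Pi.single i (1:R)) : Fin l → R))) := by rw [hrr]
    _ = j (h (α.rangeRestrict (Pi.single i (1:R)))) := by rw [hext]
    _ = j (g (Pi.single i (1:R))) := congrArg j (LinearMap.congr_fun hh _)
    _ = j (c i) := by rw [hg, combo_single]
    _ = (e i : H) := hc i

theorem lift_of_pure {Q : Type u} [AddCommGroup Q] [Module R Q] (N : Submodule R Q)
    (hN : IsPureSubmodule R N) (F : Type u) [AddCommGroup F] [Module R F]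
    (hF : Module.FinitePresentation R F) (g : F →ₗ[R] Q ⧸ N) :
    ∃ u : F →ₗ[R] Q, N.mkQ ∘ₗ u = g := by
  classical
  haveI := hF
  obtain ⟨n, π, hπ⟩ := Module.Finite.exists_fin' R F
  have hkfg : (LinearMap.ker π).FG := Module.FinitePresentation.fg_ker π hπ
  obtain ⟨k, r, hr⟩ := Submodule.fg_iff_exists_fin_generating_family.mp hkfg
  -- lift the images of the standard basis vectors
  choose q hq using fun j' => N.mkQ_surjective (g (π (Pi.single j' (1:R))))
  -- the constants of the relation system, lying in `N`
  have hm : ∀ i, (∑ j', r i j' • q j') ∈ N := by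
    intro i
    have h0 : N.mkQ (∑ j', r i j' • q j') = g (π (r i)) := by
      conv_rhs => rw [← sum_single_smul (r i)]
      simp only [map_sum, map_smul, hq]
    have hri : r i ∈ LinearMap.ker π := by
      rw [← hr]; exact Submodule.subset_span ⟨i, rfl⟩
    rw [LinearMap.mem_ker.mp hri, map_zero] at h0
    rwa [← Submodule.Quotient.mk_eq_zero, ← Submodule.mkQ_apply]
  obtain ⟨y, hy⟩ := hN k n (fun i j' => r i j') (fun i => ⟨_, hm i⟩) ⟨q, fun i => rfl⟩
  set u₀ : (Fin n → R) →ₗ[R] Q := combo (fun j' => q j' - (y j' : Q)) with hu₀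
  have hker : LinearMap.ker π ≤ LinearMap.ker u₀ := by
    rw [← hr, Submodule.span_le]
    rintro z ⟨i, rfl⟩
    simp only [SetLike.mem_coe, LinearMap.mem_ker, hu₀, combo_apply, smul_sub,
      Finset.sum_sub_distrib]
    rw [hy i]
    exact sub_self _
  obtain ⟨u, hu⟩ := factor_through_surjective π u₀ hπ hker
  refine ⟨u, ?_⟩
  rw [← LinearMap.cancel_right hπ, LinearMap.comp_assoc, hu]
  apply LinearMap.ext; intro v
  simp only [LinearMap.comp_apply, hu₀, combo_apply, map_sum, map_smul, map_sub]
  have hyN : ∀ j', N.mkQ (y j' : Q) = 0 := fun j' => by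
    simp [Submodule.Quotient.mk_eq_zero]
  simp only [hyN, sub_zero, hq, ← map_smul, ← map_sum]
  congr 1
  congr 1
  exact sum_single_smul v

theorem fpInjective_of_pure {M Q : Type u} [AddCommGroup M] [Module R M]
    [AddCommGroup Q] [Module R Q] (hQ : IsFPInjective R Q) (ι : M →ₗ[R] Q)
    (hι : Function.Injective ι) (hpure : IsPureSubmodule R (LinearMap.range ι)) :
    IsFPInjective R M := by
  intro F _ _ hF X _ _ i p hi hp hker
  set W : Submodule R (Q × X) := LinearMap.range (ι.prod (-i)) with hW
  set iQ : Q →ₗ[R] (Q × X) ⧸ W := W.mkQ ∘ₗ LinearMap.inl R Q X with hiQ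
  have hiQinj : Function.Injective iQ := by
    refine (injective_iff_map_eq_zero _).mpr fun q' hq' => ?_
    have : ((q', 0) : Q × X) ∈ W := by
      simpa [hiQ, Submodule.Quotient.mk_eq_zero] using hq'
    obtain ⟨m, hm⟩ := this
    have h2 : -(i m) = 0 := congrArg Prod.snd hm
    have h3 : m = 0 := hi (by simpa using h2)
    have h1 := congrArg Prod.fst hm
    simp [h3] at h1
    exact h1.symm
  set pX : ((Q × X) ⧸ W) →ₗ[R] F := W.liftQ (p ∘ₗ LinearMap.snd R Q X) (by
    rintro z ⟨m, rfl⟩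
    have : i m ∈ LinearMap.ker p := by rw [hker]; exact ⟨m, rfl⟩
    simp [LinearMap.mem_ker.mp this]) with hpX
  have hpXsurj : Function.Surjective pX := fun z => by
    obtain ⟨x, rfl⟩ := hp z
    exact ⟨Submodule.Quotient.mk (0, x), by simp [hpX]⟩
  have hkerpX : LinearMap.ker pX = LinearMap.range iQ := by
    ext z
    obtain ⟨⟨q', x⟩, rfl⟩ := W.mkQ_surjective z
    simp only [LinearMap.mem_ker, LinearMap.mem_range]
    constructor
    · intro hz
      have hx : x ∈ LinearMap.ker p := by simpa [hpX] using hz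
      rw [hker] at hx
      obtain ⟨m, rfl⟩ := hx
      refine ⟨q' + ι m, ?_⟩
      rw [hiQ]
      simp only [LinearMap.comp_apply, LinearMap.inl_apply, Submodule.mkQ_apply]
      rw [Submodule.Quotient.eq]
      have hv : ((q' + ι m, 0) : Q × X) - (q', i m) = (ι.prod (-i)) m := by
        rw [Prod.ext_iff]
        constructor
        · simp
        · simp
      rw [hv]
      exact ⟨m, rfl⟩
    · rintro ⟨q'', hq''⟩
      rw [← hq'']
      simp [hiQ, hpX]
  obtain ⟨s', hs'⟩ := hQ F hF ((Q × X) ⧸ W) iQ pX hiQinj hpXsurj hkerpX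
  set t : X →ₗ[R] Q := s' ∘ₗ W.mkQ ∘ₗ LinearMap.inr R Q X with ht
  have htι : ∀ m, t (i m) = ι m := by
    intro m
    have h1 : W.mkQ (0, i m) - W.mkQ (ι m, 0) = W.mkQ (-ι m, i m) := by
      rw [← map_sub]; congr 1; simp [Prod.ext_iff]
    have h2 : W.mkQ ((-ι m, i m) : Q × X) = 0 := by
      simp only [Submodule.mkQ_apply, Submodule.Quotient.mk_eq_zero, hW]
      exact ⟨-m, by simp⟩
    have h3 : W.mkQ (0, i m) = iQ (ι m) := by
      have := h1.trans h2
      rw [sub_eq_zero] at this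
      simpa [hiQ] using this
    calc t (i m) = s' (W.mkQ (0, i m)) := rfl
      _ = s' (iQ (ι m)) := by rw [h3]
      _ = ι m := by rw [← LinearMap.comp_apply, hs']; rfl
  set N := LinearMap.range ι with hN
  -- induced map F → Q/N
  obtain ⟨gbar, hgbar⟩ := factor_through_surjective p (N.mkQ ∘ₗ t) hp (by
    intro x hx
    rw [hker] at hx
    obtain ⟨m, rfl⟩ := hx
    simp only [LinearMap.mem_ker, LinearMap.comp_apply, htι m, Submodule.mkQ_apply,
      Submodule.Quotient.mk_eq_zero]
    exact ⟨m, rfl⟩)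
  obtain ⟨u, hu⟩ := lift_of_pure N hpure F hF gbar
  have hd : ∀ x, t x - u (p x) ∈ N := by
    intro x
    rw [← Submodule.Quotient.mk_eq_zero, ← Submodule.mkQ_apply, map_sub]
    have h1 : N.mkQ (t x) = gbar (p x) := (LinearMap.congr_fun hgbar x).symm
    have h2 : N.mkQ (u (p x)) = gbar (p x) := LinearMap.congr_fun hu (p x)
    rw [h1, h2, sub_self]
  set eN := LinearEquiv.ofInjective ι hι with heN
  refine ⟨eN.symm.toLinearMap ∘ₗ LinearMap.codRestrict N (t - u ∘ₗ p) hd, ?_⟩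
  apply LinearMap.ext; intro m
  have hpm : p (i m) = 0 := by
    have : i m ∈ LinearMap.ker p := by rw [hker]; exact ⟨m, rfl⟩
    exact LinearMap.mem_ker.mp this
  have hcod : LinearMap.codRestrict N (t - u ∘ₗ p) hd (i m) = eN m := by
    apply Subtype.ext
    have : (eN m : Q) = ι m := rfl
    rw [this]
    simp [htι m, hpm]
  simp only [LinearMap.comp_apply, LinearMap.id_apply, LinearEquiv.coe_coe]
  rw [hcod, LinearEquiv.symm_apply_apply]


end AuxLemmas

/-- If `E` is FP-injective, `U` a pure submodule of `E` and `H` an injective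
hull of `E` (via `j`), then the induced map `E/U → H/j(U)` is injective with pure image;
consequently, if `H/j(U)` is FP-injective then so is `E/U`. -/
theorem quotient_pure_in_injective_hull_quotient (R : Type u) [Ring R]
    (E H : Type u) [AddCommGroup E] [Module R E] [AddCommGroup H] [Module R H]
    (hE : IsFPInjective R E) (U : Submodule R E) (hU : IsPureSubmodule R U)
    (j : E →ₗ[R] H) (hj : Function.Injective j) (hinj : Module.Injective R H)
    (hess : IsEssentialSubmodule R (LinearMap.range j)) :
    Function.Injective (Submodule.mapQ U (U.map j) j (Submodule.le_comap_map j U)) ∧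
    IsPureSubmodule R
      (LinearMap.range (Submodule.mapQ U (U.map j) j (Submodule.le_comap_map j U))) ∧
    (IsFPInjective R (H ⧸ U.map j) → IsFPInjective R (E ⧸ U)) := by
  classical
  set φ := Submodule.mapQ U (U.map j) j (Submodule.le_comap_map j U) with hφ
  have hφ_mk : ∀ e : E, φ (Submodule.Quotient.mk e) = Submodule.Quotient.mk (j e) :=
    fun e => Submodule.mapQ_apply _ _ _ _
  have hφinj : Function.Injective φ := by
    refine (injective_iff_map_eq_zero _).mpr fun z hz => ?_
    obtain ⟨e', rfl⟩ := U.mkQ_surjective z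
    rw [Submodule.mkQ_apply, hφ_mk, Submodule.Quotient.mk_eq_zero] at hz
    obtain ⟨u', hu'U, hu'⟩ := hz
    have : u' = e' := hj hu'
    rw [Submodule.mkQ_apply, Submodule.Quotient.mk_eq_zero]
    rwa [← this]
  have hrangepure : IsPureSubmodule R (LinearMap.range φ) := by
    have hA := fpInjective_range_pure hE j hj
    rintro k l a e ⟨x, hx⟩
    -- write each e i as φ (mk ê i)
    have : ∀ i, ∃ ee : E, φ (Submodule.Quotient.mk ee) = (e i : H ⧸ U.map j) := by
      intro i
      obtain ⟨z, hz⟩ := (e i).2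
      obtain ⟨ee, rfl⟩ := U.mkQ_surjective z
      exact ⟨ee, hz⟩
    choose ee hee using this
    -- lift x to H
    choose x' hx' using fun j' => (U.map j).mkQ_surjective (x j')
    -- the defect lies in U.map j
    have hdef : ∀ i, ∃ u' ∈ U, (∑ j', a i j' • x' j') = j (ee i + u') := by
      intro i
      have h1 : (U.map j).mkQ (∑ j', a i j' • x' j' - j (ee i)) = 0 := by
        rw [map_sub, map_sum]
        simp only [map_smul]
        have h2 : ∀ j', (U.map j).mkQ (x' j') = x j' := hx'
        simp only [h2]
        rw [hx i]
        rw [← hee i, Submodule.mkQ_apply, hφ_mk, sub_self]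
      rw [Submodule.mkQ_apply, Submodule.Quotient.mk_eq_zero] at h1
      obtain ⟨u', hu'U, hu'⟩ := h1
      refine ⟨u', hu'U, ?_⟩
      rw [map_add, hu']
      abel
    choose uu huuU huu using hdef
    -- apply purity of range j in H
    obtain ⟨y, hy⟩ := hA k l a (fun i => ⟨j (ee i + uu i), ⟨_, rfl⟩⟩) ⟨x', fun i => huu i⟩
    choose w hw using fun j' => (y j').2
    have hsolve : ∀ i, ∑ j', a i j' • w j' = ee i + uu i := by
      intro i
      apply hj
      rw [map_sum]
      simp only [map_smul, hw]
      exact hy i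
    refine ⟨fun j' => ⟨φ (Submodule.Quotient.mk (w j')), ⟨_, rfl⟩⟩, fun i => ?_⟩
    have hmk : Submodule.Quotient.mk (p := U) (∑ j', a i j' • w j')
        = ∑ j', a i j' • Submodule.Quotient.mk (w j') := by
      rw [← Submodule.mkQ_apply, map_sum]
      simp only [map_smul, Submodule.mkQ_apply]
    calc ∑ j', a i j' • φ (Submodule.Quotient.mk (w j'))
        = φ (Submodule.Quotient.mk (∑ j', a i j' • w j')) := by
          rw [hmk, map_sum]
          simp only [map_smul]
      _ = φ (Submodule.Quotient.mk (ee i + uu i)) := by rw [hsolve i]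
      _ = Submodule.Quotient.mk (j (ee i)) + Submodule.Quotient.mk (j (uu i)) := by
          rw [hφ_mk, map_add, Submodule.Quotient.mk_add]
      _ = (e i : H ⧸ U.map j) := by
          have hz : Submodule.Quotient.mk (p := U.map j) (j (uu i)) = 0 := by
            rw [Submodule.Quotient.mk_eq_zero]
            exact ⟨uu i, huuU i, rfl⟩
          rw [hz, add_zero, ← hee i, hφ_mk]
  exact ⟨hφinj, hrangepure, fun hQ => fpInjective_of_pure hQ φ hφinj hrangepure⟩
end

section
/- Let R be a commutative ring such that every R-module M with Ext¹_R(C, M) = 0 for all cyclic flat R-modules C is cotorsion. Then R_P is a perfect ring for every maximal ideal P. -/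
universe u v

open LinearMap


/-- Factor a linear map through a surjection whose kernel it kills. -/
theorem my_exists_comp_eq_of_surjective {R M N Q : Type*} [Ring R]
    [AddCommGroup M] [Module R M] [AddCommGroup N] [Module R N] [AddCommGroup Q] [Module R Q]
    (f : M →ₗ[R] N) (hf : Function.Surjective f) (g : M →ₗ[R] Q)
    (hle : LinearMap.ker f ≤ LinearMap.ker g) : ∃ q : N →ₗ[R] Q, q ∘ₗ f = g := by
  refine ⟨(LinearMap.ker f).liftQ g hle ∘ₗ (f.quotKerEquivOfSurjective hf).symm.toLinearMap, ?_⟩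
  ext x
  have h1 : (f.quotKerEquivOfSurjective hf) (Submodule.Quotient.mk x) = f x := rfl
  simp only [LinearMap.comp_apply, LinearEquiv.coe_coe, ← h1, LinearEquiv.symm_apply_apply]
  exact Submodule.liftQ_apply _ g x

/-- Purity consequence of flatness for a cyclic module. -/
theorem my_exists_mul_eq_zero_smul_eq {R : Type u} [CommRing R] {C : Type u} [AddCommGroup C]
    [Module R C] (hC : Module.Flat R C) (c : C) (hc : Submodule.span R {c} = ⊤)
    (a : R) (ha : a • c = 0) : ∃ u : R, a * u = 0 ∧ u • c = c := by
  haveI := hC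
  have h0 : ∑ _i : PUnit.{u+1}, a • c = 0 := by simp [ha]
  obtain ⟨κ, b, y, hy, hb⟩ := Module.Flat.isTrivialRelation_of_sum_smul_eq_zero
    (f := fun _ : PUnit.{u+1} => a) (x := fun _ => c) h0
  have hyc : ∀ j, y j ∈ Submodule.span R {c} := fun j => hc ▸ Submodule.mem_top
  choose r hr using fun j => Submodule.mem_span_singleton.mp (hyc j)
  refine ⟨∑ j, b PUnit.unit j * r j, ?_, ?_⟩
  · rw [Finset.mul_sum]
    have hb' : ∀ j, a * b PUnit.unit j = 0 := by
      intro j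
      have := hb j
      simpa using this
    simp only [← mul_assoc, hb']
    simp
  · rw [Finset.sum_smul]
    have h1 : ∀ j, (b PUnit.unit j * r j) • c = b PUnit.unit j • y j := by
      intro j
      rw [mul_smul, hr j]
    rw [Finset.sum_congr rfl fun j _ => h1 j]
    have := hy PUnit.unit
    exact this.symm



theorem my_ext1Vanishes (R : Type u) [CommRing R] (P : Ideal R) [P.IsPrime]
    (S : Type u) [CommRing S] [Algebra R S] [IsLocalization.AtPrime S P]
    (K : Type u) [AddCommGroup K] [Module S K] [Module R K] [IsScalarTower R S K]
    (C : Type u) [AddCommGroup C] [Module R C]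
    (hcy : ∃ x : C, Submodule.span R {x} = ⊤) (hC : Module.Flat R C) :
    Ext1Vanishes R C K := by
  intro X _ _ i p hi hp hker
  obtain ⟨c, hc⟩ := hcy
  obtain ⟨x0, hx0⟩ := hp c
  have hmem : ∀ a : R, a • c = 0 → a • x0 ∈ LinearMap.range i := by
    intro a hac
    rw [← hker, LinearMap.mem_ker, map_smul, hx0, hac]
  -- key step: find k0 with ∀ a, a • c = 0 → i (a • k0) = a • x0
  have key : ∃ k0 : K, ∀ a : R, a • c = 0 → i (a • k0) = a • x0 := by
    by_cases hA : ∃ a0 : R, a0 • c = 0 ∧ a0 ∉ P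
    · obtain ⟨a0, ha0c, ha0P⟩ := hA
      obtain ⟨k1, hk1⟩ := hmem a0 ha0c
      have hu : IsUnit (algebraMap R S a0) := IsLocalization.map_units (M := P.primeCompl) S ⟨a0, ha0P⟩
      obtain ⟨v, hv⟩ := hu.exists_left_inv
      refine ⟨v • k1, fun a hac => ?_⟩
      obtain ⟨k2, hk2⟩ := hmem a hac
      have h12 : a0 • k2 = a • k1 := hi (by
        rw [map_smul, map_smul, hk1, hk2, smul_smul, smul_smul, mul_comm])
      have hcalc : a • v • k1 = k2 := by
        rw [← algebraMap_smul S a (v • k1), smul_smul, mul_comm, mul_smul,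
          algebraMap_smul, ← h12, ← algebraMap_smul S a0 k2, smul_smul, hv, one_smul]
      rw [hcalc, hk2]
    · push_neg at hA
      refine ⟨0, fun a hac => ?_⟩
      rw [smul_zero, map_zero]
      obtain ⟨u, hau, huc⟩ := my_exists_mul_eq_zero_smul_eq hC c hc a hac
      have hbP : (1 - u) ∈ P := hA (1 - u) (by rw [sub_smul, one_smul, huc, sub_self])
      have huP : u ∉ P := fun huP => by
        have : (1 : R) ∈ P := by
          have := P.add_mem hbP huP
          simpa using this
        exact (Ideal.IsPrime.ne_top ‹P.IsPrime›) (P.eq_top_iff_one.mpr this)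
      have huS : IsUnit (algebraMap R S u) := IsLocalization.map_units (M := P.primeCompl) S ⟨u, huP⟩
      obtain ⟨k2, hk2⟩ := hmem a hac
      have huk2 : u • k2 = 0 := hi (by
        rw [map_smul, hk2, smul_smul, mul_comm, hau, zero_smul, map_zero])
      obtain ⟨w, hw⟩ := huS.exists_left_inv
      have : k2 = 0 := by
        have h1 : (w * algebraMap R S u) • k2 = k2 := by rw [hw, one_smul]
        rw [mul_smul, algebraMap_smul, huk2, smul_zero] at h1
        exact h1.symm
      rw [← hk2, this, map_zero]
  obtain ⟨k0, hk0⟩ := key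
  set x1 := x0 - i k0 with hx1
  have hpik0 : p (i k0) = 0 := by
    have : i k0 ∈ LinearMap.ker p := hker ▸ LinearMap.mem_range_self i k0
    exact this
  have hpx1 : p x1 = c := by rw [hx1, map_sub, hx0, hpik0, sub_zero]
  have hax1 : ∀ a : R, a • c = 0 → a • x1 = 0 := by
    intro a hac
    rw [hx1, smul_sub, ← map_smul, hk0 a hac, sub_self]
  have hφ : Function.Surjective (LinearMap.toSpanSingleton R C c) := by
    intro z
    obtain ⟨r, hr⟩ := Submodule.mem_span_singleton.mp (hc ▸ Submodule.mem_top (x := z))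
    exact ⟨r, hr⟩
  obtain ⟨g, hg⟩ := my_exists_comp_eq_of_surjective (LinearMap.toSpanSingleton R C c) hφ
    (LinearMap.toSpanSingleton R X x1) (by
      intro r hr
      rw [LinearMap.mem_ker, LinearMap.toSpanSingleton_apply] at hr ⊢
      exact hax1 r hr)
  have hg' : ∀ r : R, g (r • c) = r • x1 := by
    intro r
    have := LinearMap.congr_fun hg r
    simpa [LinearMap.toSpanSingleton_apply] using this
  have hpg : ∀ z : C, p (g z) = z := by
    intro z
    obtain ⟨r, hr⟩ := hφ z
    rw [LinearMap.toSpanSingleton_apply] at hr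
    rw [← hr, hg' r, map_smul, hpx1]
  set q : X →ₗ[R] X := LinearMap.id - g ∘ₗ p with hq
  have hqmem : ∀ x : X, q x ∈ LinearMap.range i := by
    intro x
    rw [← hker, LinearMap.mem_ker]
    simp [hq, hpg]
  have hpik : ∀ m : K, p (i m) = 0 := by
    intro m
    have : i m ∈ LinearMap.ker p := hker ▸ LinearMap.mem_range_self i m
    exact this
  refine ⟨(LinearEquiv.ofInjective i hi).symm.toLinearMap ∘ₗ
    q.codRestrict (LinearMap.range i) hqmem, ?_⟩
  ext k
  apply hi
  have h2 : ∀ z : ↥(LinearMap.range i), i ((LinearEquiv.ofInjective i hi).symm z) = (z : X) := by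
    intro z
    rw [← LinearEquiv.ofInjective_apply i (h := hi), LinearEquiv.apply_symm_apply]
  simp only [LinearMap.comp_apply, LinearEquiv.coe_coe, h2, LinearMap.codRestrict_apply,
    LinearMap.id_coe, id_eq, hq, LinearMap.sub_apply]
  rw [hpik k, map_zero, sub_zero]

set_option maxHeartbeats 1600000 in
/-- If every `R`-module `M` with `Ext¹(C, M) = 0` for all cyclic flat `C`
is cotorsion, then `R_P` is perfect for every maximal ideal `P`. -/
theorem localization_perfect_of_baer_criterion (R : Type u) [CommRing R]
    (h : ∀ (M : Type u) [AddCommGroup M] [Module R M],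
      (∀ (C : Type u) [AddCommGroup C] [Module R C],
        (∃ x : C, Submodule.span R {x} = ⊤) → Module.Flat R C → Ext1Vanishes R C M) →
      ∀ (G : Type u) [AddCommGroup G] [Module R G], Module.Flat R G → Ext1Vanishes R G M)
    (P : Ideal R) (hP : P.IsMaximal) :
    ∀ (N : Type u) [AddCommGroup N] [Module (Localization.AtPrime P) N],
      Module.Flat (Localization.AtPrime P) N →
      Module.Projective (Localization.AtPrime P) N := by
  intro N _ _ hN
  haveI := hP.isPrime
  haveI := hN
  letI : Module R N := Module.compHom N (algebraMap R (Localization.AtPrime P))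
  haveI : IsScalarTower R (Localization.AtPrime P) N := ⟨fun r s n => by
    rw [Algebra.smul_def, mul_smul]; rfl⟩
  have hNflatR : Module.Flat R N := Module.Flat.trans R (Localization.AtPrime P) N
  -- free presentation
  set π : (N →₀ Localization.AtPrime P) →ₗ[Localization.AtPrime P] N :=
    Finsupp.linearCombination (Localization.AtPrime P) (id : N → N) with hπdef
  have hπ : Function.Surjective π := fun n => ⟨Finsupp.single n 1, by simp [hπdef]⟩
  set K := LinearMap.ker π with hK
  -- premise of h for ↥K
  have hprem : ∀ (C : Type u) [AddCommGroup C] [Module R C],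
      (∃ x : C, Submodule.span R {x} = ⊤) → Module.Flat R C → Ext1Vanishes R C ↥K := by
    intro C _ _ hcy hC
    exact my_ext1Vanishes R P (Localization.AtPrime P) ↥K C hcy hC
  have hext : Ext1Vanishes R N ↥K := h ↥K hprem N hNflatR
  -- apply to the presentation, restricted to R
  set iR : ↥K →ₗ[R] (N →₀ Localization.AtPrime P) := (K.subtype).restrictScalars R with hiR
  set pR : (N →₀ Localization.AtPrime P) →ₗ[R] N := π.restrictScalars R with hpR
  have hiRinj : Function.Injective iR := Subtype.coe_injective
  have hpRsurj : Function.Surjective pR := hπ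
  have hkerR : LinearMap.ker pR = LinearMap.range iR := by
    ext x
    constructor
    · intro hx
      exact ⟨⟨x, hx⟩, rfl⟩
    · rintro ⟨k, rfl⟩
      exact k.2
  obtain ⟨s, hs⟩ := hext (N →₀ Localization.AtPrime P) iR pR hiRinj hpRsurj hkerR
  -- s is automatically S-linear
  have hsS : ∀ (u : Localization.AtPrime P) (x : N →₀ Localization.AtPrime P),
      s (u • x) = u • s x := by
    intro u x
    obtain ⟨⟨r, t⟩, hrt⟩ := IsLocalization.surj (M := P.primeCompl) u
    have ht : IsUnit (algebraMap R (Localization.AtPrime P) (t : R)) :=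
      IsLocalization.map_units (M := P.primeCompl) _ t
    obtain ⟨v, hv⟩ := ht.exists_left_inv
    have h1 : (t : R) • s (u • x) = (t : R) • (u • s x) := by
      rw [← map_smul, ← algebraMap_smul (Localization.AtPrime P) (t : R) (u • x),
        smul_smul, mul_comm, hrt, algebraMap_smul, map_smul,
        ← algebraMap_smul (Localization.AtPrime P) r (s x), ← hrt, mul_smul,
        algebraMap_smul, smul_comm]
    have h2 : algebraMap R (Localization.AtPrime P) (t : R) • s (u • x)
        = algebraMap R (Localization.AtPrime P) (t : R) • (u • s x) := by
      rwa [algebraMap_smul, algebraMap_smul]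
    calc s (u • x) = (v * algebraMap R (Localization.AtPrime P) (t : R)) • s (u • x) := by
          rw [hv, one_smul]
      _ = v • (algebraMap R (Localization.AtPrime P) (t : R) • s (u • x)) := mul_smul _ _ _
      _ = v • (algebraMap R (Localization.AtPrime P) (t : R) • (u • s x)) := by rw [h2]
      _ = (v * algebraMap R (Localization.AtPrime P) (t : R)) • (u • s x) := (mul_smul _ _ _).symm
      _ = u • s x := by rw [hv, one_smul]
  set s' : (N →₀ Localization.AtPrime P) →ₗ[Localization.AtPrime P] ↥K :=
    { toFun := s, map_add' := s.map_add, map_smul' := hsS } with hs'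
  -- section of π
  have hτker : LinearMap.ker π ≤ LinearMap.ker
      (LinearMap.id - K.subtype ∘ₗ s' :
        (N →₀ Localization.AtPrime P) →ₗ[Localization.AtPrime P] _) := by
    intro x hx
    have hsx : s' x = ⟨x, hx⟩ := by
      have := LinearMap.congr_fun hs (⟨x, hx⟩ : ↥K)
      exact this
    simp [LinearMap.mem_ker, hsx]
  obtain ⟨σ, hσ⟩ := my_exists_comp_eq_of_surjective π hπ
    (LinearMap.id - K.subtype ∘ₗ s') hτker
  have hπσ : π ∘ₗ σ = LinearMap.id := by
    ext n
    obtain ⟨x, hx⟩ := hπ n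
    have h1 : σ (π x) = x - K.subtype (s' x) := by
      have := LinearMap.congr_fun hσ x
      simpa using this
    have h2 : π (K.subtype (s' x)) = 0 := (s' x).2
    simp only [LinearMap.comp_apply, LinearMap.id_apply]
    rw [← hx, h1, map_sub, h2, sub_zero]
  exact Module.Projective.of_split σ π hπσ
end

section
/- Let R be a commutative ring such that R_P is strongly perfect (every P-flat R_P-module is projective) for each maximal ideal P. Then every P-flat R-module is flat. -/
universe u v

open TensorProduct
instance aux_isLocalizedModule_rTensor (R : Type u) [CommRing R] (S : Submonoid R)
    (M : Type u) [AddCommGroup M] [Module R M] (N : Type u) [AddCommGroup N] [Module R N] :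
    IsLocalizedModule S ((LocalizedModule.mkLinearMap S M).rTensor N) := by
  set A := Localization S with hA
  have bX := IsLocalizedModule.isBaseChange S A (LocalizedModule.mkLinearMap S (M ⊗[R] N))
  have bM := IsLocalizedModule.isBaseChange S A (LocalizedModule.mkLinearMap S M)
  let E : A ⊗[R] (M ⊗[R] N) ≃ₗ[R] (LocalizedModule S M) ⊗[R] N :=
    (TensorProduct.assoc R A M N).symm ≪≫ₗ
      TensorProduct.congr (bM.equiv.restrictScalars R) (LinearEquiv.refl R N)
  let e : LocalizedModule S (M ⊗[R] N) ≃ₗ[R] (LocalizedModule S M) ⊗[R] N :=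
    (bX.equiv.restrictScalars R).symm ≪≫ₗ E
  have key : (LocalizedModule.mkLinearMap S M).rTensor N =
      (e : LocalizedModule S (M ⊗[R] N) →ₗ[R] (LocalizedModule S M) ⊗[R] N) ∘ₗ
        LocalizedModule.mkLinearMap S (M ⊗[R] N) := by
    apply TensorProduct.ext'
    intro m n
    show (LocalizedModule.mkLinearMap S M m) ⊗ₜ[R] n
      = e (LocalizedModule.mkLinearMap S (M ⊗[R] N) (m ⊗ₜ[R] n))
    have h1 : (bX.equiv.restrictScalars R).symm
        (LocalizedModule.mkLinearMap S (M ⊗[R] N) (m ⊗ₜ[R] n)) = 1 ⊗ₜ[R] (m ⊗ₜ[R] n) :=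
      bX.equiv_symm_apply (m ⊗ₜ[R] n)
    show _ = E ((bX.equiv.restrictScalars R).symm
        (LocalizedModule.mkLinearMap S (M ⊗[R] N) (m ⊗ₜ[R] n)))
    rw [h1]
    show _ = TensorProduct.congr (bM.equiv.restrictScalars R) (LinearEquiv.refl R N)
        ((TensorProduct.assoc R A M N).symm ((1 : A) ⊗ₜ[R] (m ⊗ₜ[R] n)))
    rw [TensorProduct.assoc_symm_tmul, TensorProduct.congr_tmul]
    have h2 : bM.equiv ((1 : A) ⊗ₜ[R] m) = (1 : A) • LocalizedModule.mkLinearMap S M m :=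
      bM.equiv_tmul 1 m
    rw [one_smul] at h2
    show _ = (bM.equiv ((1 : A) ⊗ₜ[R] m)) ⊗ₜ[R] n
    rw [h2]
  rw [key]
  exact IsLocalizedModule.of_linearEquiv S (LocalizedModule.mkLinearMap S (M ⊗[R] N)) e

theorem aux_pflat_localized (R : Type u) [CommRing R] (S : Submonoid R)
    (M : Type u) [AddCommGroup M] [Module R M] (hM : IsPFlat R M) :
    IsPFlat (Localization S) (LocalizedModule S M) := by
  intro rho m hrm
  induction rho using Localization.induction_on with
  | H a =>
    obtain ⟨r, u⟩ := a
    induction m using LocalizedModule.induction_on with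
    | h m0 v =>
      rw [LocalizedModule.mk_smul_mk, ← LocalizedModule.zero_mk (1 : S),
        LocalizedModule.mk_eq] at hrm
      obtain ⟨c, hc⟩ := hrm
      simp only [smul_zero, one_smul] at hc
      have hcr : ((c : R) * r) • m0 = 0 := by
        rw [mul_smul]
        simpa [Submonoid.smul_def] using hc
      have h0 := hM ((c : R) * r) m0 hcr
      set T : Set (LocalizedModule S M) :=
        {x | ∃ s : Localization S, ∃ y, Localization.mk r u * s = 0 ∧ x = s • y} with hT
      have key : Submodule.span R {x : M | ∃ s : R, ∃ y : M, (c : R) * r * s = 0 ∧ x = s • y} ≤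
          (Submodule.restrictScalars R
            (Submodule.span (Localization S) T)).comap (LocalizedModule.mkLinearMap S M) := by
        rw [Submodule.span_le]
        rintro x ⟨s, y, hs, rfl⟩
        show (LocalizedModule.mkLinearMap S M) (s • y) ∈
          Submodule.span (Localization S) T
        apply Submodule.subset_span
        refine ⟨Localization.mk ((c : R) * s) 1, LocalizedModule.mk y c, ?_, ?_⟩
        · rw [Localization.mk_mul]
          have : r * ((c : R) * s) = (c : R) * r * s := by ring
          rw [this, hs, Localization.mk_zero]
        · rw [LocalizedModule.mkLinearMap_apply, LocalizedModule.mk_smul_mk,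
            LocalizedModule.mk_eq]
          refine ⟨1, ?_⟩
          show (1:S) • ((1:S) * c) • s • y = (1:S) • (1:S) • ((c : R) * s) • y
          simp only [one_smul, one_mul, Submonoid.smul_def, mul_smul]
      have hmem : LocalizedModule.mkLinearMap S M m0 ∈
          Submodule.span (Localization S) T := key h0
      have hrepr : LocalizedModule.mk m0 v =
          Localization.mk 1 v • LocalizedModule.mkLinearMap S M m0 := by
        rw [LocalizedModule.mkLinearMap_apply, LocalizedModule.mk_smul_mk, one_smul, mul_one]
      rw [hrepr]
      exact Submodule.smul_mem _ _ hmem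

/-- If `R_P` is strongly perfect (every P-flat module is projective) for
every maximal ideal `P`, then every P-flat `R`-module is flat. -/
theorem flat_of_pflat_of_locally_strongly_perfect (R : Type u) [CommRing R]
    (hsp : ∀ (P : Ideal R) (hP : P.IsMaximal), ∀ (N : Type u) [AddCommGroup N]
      [Module (Localization.AtPrime P) N],
      IsPFlat (Localization.AtPrime P) N → Module.Projective (Localization.AtPrime P) N)
    (M : Type u) [AddCommGroup M] [Module R M] (hM : IsPFlat R M) :
    Module.Flat R M := by
  rw [Module.Flat.iff_lTensor_injective']
  intro I
  have flatP : ∀ (P : Ideal R) [P.IsMaximal],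
      Module.Flat R (LocalizedModule P.primeCompl M) := by
    intro P hP
    have hpf := aux_pflat_localized R P.primeCompl M hM
    haveI := hsp P hP (LocalizedModule P.primeCompl M) hpf
    haveI : Module.Flat (Localization.AtPrime P) (LocalizedModule P.primeCompl M) :=
      Module.Flat.of_projective
    exact Module.Flat.trans R (Localization.AtPrime P) (LocalizedModule P.primeCompl M)
  haveI inst1 : ∀ (P : Ideal R) [P.IsMaximal],
      IsLocalizedModule P.primeCompl
        ((LocalizedModule.mkLinearMap P.primeCompl M).rTensor (I : Type u)) :=
    fun P _ => aux_isLocalizedModule_rTensor R P.primeCompl M I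
  haveI inst2 : ∀ (P : Ideal R) [P.IsMaximal],
      IsLocalizedModule P.primeCompl
        ((LocalizedModule.mkLinearMap P.primeCompl M).rTensor R) :=
    fun P _ => aux_isLocalizedModule_rTensor R P.primeCompl M R
  apply injective_of_isLocalized_maximal
    (fun P _ => (LocalizedModule P.primeCompl M) ⊗[R] I)
    (fun P _ => (LocalizedModule.mkLinearMap P.primeCompl M).rTensor I)
    (fun P _ => (LocalizedModule P.primeCompl M) ⊗[R] R)
    (fun P _ => (LocalizedModule.mkLinearMap P.primeCompl M).rTensor R)
  intro P hP
  haveI := flatP P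
  have hkey : IsLocalizedModule.map P.primeCompl
      ((LocalizedModule.mkLinearMap P.primeCompl M).rTensor I)
      ((LocalizedModule.mkLinearMap P.primeCompl M).rTensor R)
      (LinearMap.lTensor M I.subtype)
      = LinearMap.lTensor (LocalizedModule P.primeCompl M) I.subtype := by
    apply IsLocalizedModule.ext P.primeCompl
      ((LocalizedModule.mkLinearMap P.primeCompl M).rTensor (I : Type u))
      (IsLocalizedModule.map_units ((LocalizedModule.mkLinearMap P.primeCompl M).rTensor R))
    rw [IsLocalizedModule.map_comp]
    apply TensorProduct.ext'
    intro m i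
    simp
  rw [hkey]
  exact Module.Flat.lTensor_preserves_injective_linearMap I.subtype (Submodule.injective_subtype I)
end

section
/- Let R be a ring and A a two-sided ideal. If every RD-essential extension of left R-modules is essential, then every RD-essential extension of left R/A-modules is essential. -/
universe u v

section Aux

variable {R S : Type u} [Ring R] [Ring S] (f : R →+* S)

/-- Restriction of scalars along `f` of a submodule. -/
def restrSub {N : Type u} [AddCommGroup N] [Module S N] (p : Submodule S N) :
    @Submodule R N _ _ (Module.compHom N f) :=
  letI : Module R N := Module.compHom N f
  { carrier := p
    add_mem' := fun ha hb => p.add_mem ha hb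
    zero_mem' := p.zero_mem
    smul_mem' := fun r x hx => p.smul_mem (f r) hx }

/-- Extension of scalars along a surjective `f` of a submodule. -/
def unreSub (hf : Function.Surjective f) {N : Type u} [AddCommGroup N] [Module S N]
    (K : @Submodule R N _ _ (Module.compHom N f)) : Submodule S N :=
  letI : Module R N := Module.compHom N f
  { carrier := K
    add_mem' := fun ha hb => K.add_mem ha hb
    zero_mem' := K.zero_mem
    smul_mem' := fun s x hx => by
      obtain ⟨r, rfl⟩ := hf s
      exact K.smul_mem r hx }

theorem rd_essential_surjective (hf : Function.Surjective f)
    (h : ∀ (N : Type u) [AddCommGroup N] [Module R N] (M' : Submodule R N),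
      IsRDEssential R M' → IsEssentialSubmodule R M') :
    ∀ (N : Type u) [AddCommGroup N] [Module S N] (M' : Submodule S N),
      IsRDEssential S M' → IsEssentialSubmodule S M' := by
  intro N _ _ M' hRD
  letI : Module R N := Module.compHom N f
  have key : IsRDEssential R (restrSub f M') := by
    constructor
    · intro r n hn hex
      obtain ⟨n', hn', hrn'⟩ := hRD.1 (f r) n hn hex
      exact ⟨n', hn', hrn'⟩
    · intro K hK hKM hpure
      refine hRD.2 (unreSub f hf K) ?_ ?_ ?_
      · intro hbot
        apply hK
        rw [Submodule.eq_bot_iff] at hbot ⊢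
        exact fun x hx => hbot x hx
      · rw [Submodule.eq_bot_iff] at hKM ⊢
        intro x hx
        exact hKM x ⟨hx.1, hx.2⟩
      · -- transfer RD-purity from the R-quotient to the S-quotient
        intro s nbar hnbar hex
        obtain ⟨r, rfl⟩ := hf s
        obtain ⟨x, hx, rfl⟩ := hnbar
        obtain ⟨m, hm⟩ := hex
        obtain ⟨mm, rfl⟩ := (unreSub f hf K).mkQ_surjective m
        have hx' : K.mkQ x ∈ (restrSub f M').map K.mkQ := ⟨x, hx, rfl⟩
        have hmem : f r • mm - x ∈ K := by
          have h1 : Submodule.Quotient.mk (p := unreSub f hf K) (f r • mm)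
              = Submodule.Quotient.mk x := by
            rw [Submodule.Quotient.mk_smul]; exact hm
          exact (Submodule.Quotient.eq (unreSub f hf K)).mp h1
        have hex' : ∃ m' : N ⧸ K, r • m' = K.mkQ x := by
          refine ⟨K.mkQ mm, ?_⟩
          rw [← map_smul]
          exact (Submodule.Quotient.eq K).mpr hmem
        obtain ⟨n', ⟨y, hy, rfl⟩, hrn'⟩ := hpure r (K.mkQ x) hx' hex'
        refine ⟨(unreSub f hf K).mkQ y, ⟨y, hy, rfl⟩, ?_⟩
        -- r • K.mkQ y = K.mkQ x  gives  f r • mkQ y = mkQ x over S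
        have : f r • y - x ∈ K := by
          have h1 : K.mkQ (f r • y) = K.mkQ x := hrn'
          exact (Submodule.Quotient.eq K).mp h1
        have h2 : (Submodule.Quotient.mk (p := unreSub f hf K) (f r • y))
            = Submodule.Quotient.mk x := (Submodule.Quotient.eq (unreSub f hf K)).mpr this
        simpa using h2
  have hess := h N (restrSub f M') key
  intro K' hK'
  have : restrSub f K' = ⊥ := by
    apply hess
    rw [Submodule.eq_bot_iff] at hK' ⊢
    intro x hx
    exact hK' x ⟨hx.1, hx.2⟩
  rw [Submodule.eq_bot_iff] at this ⊢
  exact fun x hx => this x hx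

end Aux

/-- If every RD-essential extension of left `R`-modules is essential, then
the same holds for left modules over the quotient of `R` by any two-sided ideal. -/
theorem rd_essential_quotient_ring (R : Type u) [Ring R] (I : TwoSidedIdeal R)
    (h : ∀ (N : Type u) [AddCommGroup N] [Module R N] (M' : Submodule R N),
      IsRDEssential R M' → IsEssentialSubmodule R M') :
    ∀ (N : Type u) [AddCommGroup N] [Module I.ringCon.Quotient N]
      (M' : Submodule I.ringCon.Quotient N),
      IsRDEssential I.ringCon.Quotient M' → IsEssentialSubmodule I.ringCon.Quotient M' := by
  exact rd_essential_surjective I.ringCon.mk' I.ringCon.mk'_surjective h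
end

section
/- Let R be a commutative ring that is P-coherent and has Krull dimension 0 (every prime ideal is maximal). Let X be the set of maximal ideals P with PR_P = 0 and let A be the kernel of the natural map R → ∏_{P∈X} R_P. Then A is a pure ideal of R and X = V(A). -/
universe u v

private lemma pow_iter {R : Type u} [CommRing R] (c z : R) (m : ℕ)
    (h : c ^ m = c ^ (m + 1) * z) : ∀ k : ℕ, c ^ m = c ^ (m + k) * z ^ k := by
  intro k
  induction k with
  | zero => simp
  | succ k ih =>
    rw [ih]
    linear_combination (z ^ k * c ^ k) * h

private lemma exists_idem_aux {R : Type u} [CommRing R]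
    (hdim : ∀ Q : Ideal R, Q.IsPrime → Q.IsMaximal) (c : R) :
    ∃ e : R, e * e = e ∧ e ∈ Ideal.span ({c} : Set R) ∧ ∃ m : ℕ, c ^ (m + 1) * (1 - e) = 0 := by
  classical
  set S : Submonoid R :=
    { carrier := {x | ∃ n : ℕ, ∃ z : R, x = c ^ n * (1 - c * z)}
      mul_mem' := by
        rintro x y ⟨n, z, rfl⟩ ⟨m, w, rfl⟩
        exact ⟨n + m, z + w - c * z * w, by ring⟩
      one_mem' := ⟨0, 0, by ring⟩ } with hS
  by_cases h0 : (0 : R) ∈ S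
  · obtain ⟨n, z, hz⟩ : ∃ n : ℕ, ∃ z : R, (0 : R) = c ^ n * (1 - c * z) := h0
    have key : c ^ (n + 1) = c ^ (n + 1 + 1) * z := by linear_combination (-c) * hz
    have h2 := pow_iter c z (n + 1) key (n + 1)
    refine ⟨c ^ (n + 1) * z ^ (n + 1), by linear_combination (-(z ^ (n + 1))) * h2,
      Ideal.mem_span_singleton.mpr ⟨c ^ n * z ^ (n + 1), by ring⟩, n, by linear_combination h2⟩
  · have hdisj : Disjoint ((⊥ : Ideal R) : Set R) (S : Set R) := by
      refine Set.disjoint_left.mpr fun x hx hxS => ?_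
      have : x = 0 := by simpa using hx
      exact h0 (this ▸ hxS)
    obtain ⟨p, hp, -, hdisj'⟩ := Ideal.exists_le_prime_disjoint ⊥ S hdisj
    have hcS : c ∈ S := ⟨1, 0, by ring⟩
    have hcp : c ∉ p := fun h => Set.disjoint_left.mp hdisj' h hcS
    obtain ⟨y, i, hip, hyi⟩ := (hdim p hp).exists_inv hcp
    have h1 : (1 : R) - c * y ∈ p := by
      have : (1 : R) - c * y = i := by linear_combination -hyi
      rw [this]; exact hip
    exact absurd h1 fun h => Set.disjoint_left.mp hdisj' h ⟨0, y, by ring⟩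

/-- Let `R` be P-coherent of Krull dimension 0, `X` the set of maximal
ideals `P` with `PR_P = 0`, and `A` the kernel of `R → ∏_{P ∈ X} R_P`. Then `A` is a pure
ideal and `X = V(A)`. -/
theorem kernel_is_pure_ideal_of_pcoherent (R : Type u) [CommRing R]
    (hcoh : ∀ r : R, Module.FinitePresentation R (Ideal.span {r} : Ideal R))
    (hdim : ∀ Q : Ideal R, Q.IsPrime → Q.IsMaximal)
    (X : Set (Ideal R))
    (hX : X = {P : Ideal R | P.IsMaximal ∧ ∀ a ∈ P, ∃ s ∉ P, s * a = 0})
    (A : Ideal R)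
    (hA : ∀ r : R, r ∈ A ↔ ∀ P ∈ X, ∃ s ∉ P, s * r = 0) :
    Module.Flat R (R ⧸ A) ∧ ∀ P : Ideal R, P.IsPrime → (P ∈ X ↔ A ≤ P) := by
  classical
  choose E hE1 hE2 hE3 using fun c : R => exists_idem_aux hdim c
  -- for prime Q and c with 1 - E c killed: if c ∉ Q then E c ∉ Q and E c * (anything with factor (1 - E c)) = 0
  have hEQ : ∀ (Q : Ideal R), Q.IsPrime → ∀ c : R, c ∉ Q → E c ∉ Q := by
    intro Q hQ c hc hEc
    obtain ⟨m, hm⟩ := hE3 c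
    rcases hQ.mem_or_mem (hm ▸ Q.zero_mem : c ^ (m + 1) * (1 - E c) ∈ Q) with h | h
    · exact hc (hQ.mem_of_pow_mem _ h)
    · exact Q.ne_top_iff_one.mp hQ.ne_top (by simpa using Q.add_mem h hEc)
  -- easy direction
  have hXA : ∀ P ∈ X, A ≤ P := by
    intro P hPX r hr
    have hPp : P.IsPrime := by rw [hX] at hPX; exact hPX.1.isPrime
    obtain ⟨s, hsP, hsr⟩ := (hA r).mp hr P hPX
    rcases hPp.mem_or_mem (hsr ▸ P.zero_mem : s * r ∈ P) with h | h
    · exact absurd h hsP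
    · exact h
  -- hard direction
  have hAX : ∀ P : Ideal R, P.IsPrime → A ≤ P → P ∈ X := by
    intro P hP hle
    by_contra hPX
    have hPmax : P.IsMaximal := hdim P hP
    rw [hX] at hPX
    simp only [Set.mem_setOf_eq] at hPX
    push_neg at hPX
    obtain ⟨c, hcP, hann⟩ := hPX hPmax
    have hann' : ∀ s : R, s * c = 0 → s ∈ P := by
      intro s hs; by_contra hsP; exact hann s hsP hs
    -- the annihilator of c is finitely generated
    haveI : Module.FinitePresentation R (LinearMap.range (LinearMap.toSpanSingleton R R c)) := by
      rw [← LinearMap.span_singleton_eq_range]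
      exact hcoh c
    have hfg : (LinearMap.ker (LinearMap.toSpanSingleton R R c)).FG := by
      have := Module.FinitePresentation.fg_ker
        (LinearMap.toSpanSingleton R R c).rangeRestrict
        (LinearMap.surjective_rangeRestrict _)
      rwa [LinearMap.ker_rangeRestrict] at this
    obtain ⟨s, hs⟩ := hfg
    have hsker : ∀ b ∈ s, b * c = 0 := by
      intro b hb
      have : b ∈ LinearMap.ker (LinearMap.toSpanSingleton R R c) := by
        rw [← hs]; exact Submodule.subset_span hb
      simpa [LinearMap.toSpanSingleton_apply, smul_eq_mul] using this
    set r : R := (1 - E c) * ∏ b ∈ s, (1 - E b) with hr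
    -- r ∉ P
    have hrP : r ∉ P := by
      intro h
      have h1 : ∀ x : R, x ∈ P → (1 - E x) ∉ P := by
        intro x hx h1x
        have : E x ∈ P := Ideal.span_le.mpr (Set.singleton_subset_iff.mpr hx) (hE2 x)
        exact P.ne_top_iff_one.mp hP.ne_top (by simpa using P.add_mem h1x this)
      rcases hP.mem_or_mem h with h | h
      · exact h1 c hcP h
      · obtain ⟨b, hbs, hb⟩ := Ideal.IsPrime.prod_mem_iff.mp h
        exact h1 b (hann' b (hsker b hbs)) hb
    -- r ∈ A
    have hrA : r ∈ A := by
      rw [hA]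
      intro Q hQX
      have hQ' := hQX
      rw [hX] at hQ'
      have hQmax : Q.IsMaximal := hQ'.1
      have hQp : Q.IsPrime := hQmax.isPrime
      by_cases hc : c ∈ Q
      · obtain ⟨t, htQ, htc⟩ := hQ'.2 c hc
        have ht : t ∈ Submodule.span R (s : Set R) := by
          rw [hs]
          simpa [LinearMap.toSpanSingleton_apply, smul_eq_mul] using htc
        have : ∃ b ∈ s, b ∉ Q := by
          by_contra hall
          push_neg at hall
          exact htQ (Submodule.span_le.mpr (fun x hx => hall x hx) ht)
        obtain ⟨b, hbs, hbQ⟩ := this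
        refine ⟨E b, hEQ Q hQp b hbQ, ?_⟩
        calc E b * r = (E b * (1 - E b)) * ((1 - E c) * ∏ x ∈ s.erase b, (1 - E x)) := by
              rw [hr, ← Finset.mul_prod_erase _ _ hbs]; ring
          _ = 0 := by rw [mul_sub, mul_one, hE1 b, sub_self, zero_mul]
      · refine ⟨E c, hEQ Q hQp c hc, ?_⟩
        calc E c * r = (E c * (1 - E c)) * ∏ b ∈ s, (1 - E b) := by rw [hr]; ring
          _ = 0 := by rw [mul_sub, mul_one, hE1 c, sub_self, zero_mul]
    exact hrP (hle hrA)
  -- purity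
  have hpure : ∀ a ∈ A, ∃ b ∈ A, a * b = a := by
    intro a ha
    set K : Ideal R := A ⊔ LinearMap.ker (LinearMap.toSpanSingleton R R a) with hK
    have hKtop : K = ⊤ := by
      by_contra hne
      obtain ⟨P, hPmax, hKP⟩ := Ideal.exists_le_maximal K hne
      have hPX : P ∈ X := hAX P hPmax.isPrime (le_trans le_sup_left hKP)
      obtain ⟨t, htP, hta⟩ := (hA a).mp ha P hPX
      refine htP (hKP (le_sup_right (α := Ideal R) ?_))
      simpa [LinearMap.toSpanSingleton_apply, smul_eq_mul] using hta
    have h1 : (1 : R) ∈ K := hKtop ▸ Submodule.mem_top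
    obtain ⟨b, hbA, y, hy, hby⟩ := Submodule.mem_sup.mp h1
    have hya : y * a = 0 := by
      simpa [LinearMap.toSpanSingleton_apply, smul_eq_mul] using hy
    exact ⟨b, hbA, by linear_combination a * hby - hya⟩
  refine ⟨?_, fun P hP => ⟨hXA P, hAX P hP⟩⟩
  -- flatness from purity
  rw [Module.Flat.iff_rTensor_injective']
  intro I
  rw [injective_iff_map_eq_zero]
  intro x hx
  obtain ⟨S, rfl⟩ := TensorProduct.exists_finset x
  choose g hg using Submodule.mkQ_surjective A
  have hrepr : ∀ p : I × (R ⧸ A), p.1 ⊗ₜ[R] p.2 = p.1 ⊗ₜ[R] (Submodule.mkQ A (g p.2)) := by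
    intro p; rw [hg]
  rw [Finset.sum_congr rfl (fun p _ => hrepr p)] at hx ⊢
  have hsum : (∑ p ∈ S, (p.1 : R) * g p.2) ∈ A := by
    have h0 := congrArg (TensorProduct.lid R (R ⧸ A)) hx
    rw [map_sum, map_zero] at h0
    simp only [LinearMap.rTensor_tmul, Submodule.coe_subtype] at h0
    rw [map_sum] at h0
    simp only [TensorProduct.lid_tmul] at h0
    rw [← Submodule.Quotient.mk_eq_zero A, ← Submodule.mkQ_apply, map_sum, ← h0]
    refine Finset.sum_congr rfl (fun p _ => ?_)
    rw [← map_smul, smul_eq_mul]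
  obtain ⟨b, hbA, hab⟩ := hpure _ hsum
  have hterm : ∀ p : I × (R ⧸ A),
      p.1 ⊗ₜ[R] (Submodule.mkQ A (g p.2)) = ((g p.2 * (1 - b)) • p.1) ⊗ₜ[R] (Submodule.mkQ A 1) := by
    intro p
    have h1 : Submodule.mkQ A (g p.2) = (g p.2 * (1 - b)) • (Submodule.mkQ A 1) := by
      rw [← map_smul, smul_eq_mul, mul_one]
      rw [show g p.2 * (1 - b) = g p.2 - g p.2 * b by ring, map_sub]
      have : Submodule.mkQ A (g p.2 * b) = 0 := by
        rw [Submodule.mkQ_apply, Submodule.Quotient.mk_eq_zero]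
        exact A.mul_mem_left _ hbA
      rw [this, sub_zero]
    rw [h1]
    exact (TensorProduct.smul_tmul _ _ _).symm
  rw [Finset.sum_congr rfl (fun p _ => hterm p), ← TensorProduct.sum_tmul]
  have hzero : (∑ p ∈ S, (g p.2 * (1 - b)) • p.1) = (0 : I) := by
    ext
    push_cast [Submodule.coe_smul, smul_eq_mul]
    calc (∑ p ∈ S, g p.2 * (1 - b) * (p.1 : R))
        = (∑ p ∈ S, (p.1 : R) * g p.2) * (1 - b) := by rw [Finset.sum_mul]; exact Finset.sum_congr rfl (fun p _ => by ring)
      _ = 0 := by rw [mul_sub, mul_one, hab, sub_self]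
  rw [hzero, TensorProduct.zero_tmul]
end

section
/- Let R be a commutative ring with Krull dimension 0 and nilradical N. If A is the kernel of the natural map R → ∏_{P∈X} R_P where X = {P maximal : PR_P = 0}, then R/A is a von Neumann regular ring. -/
universe u v

/-- In a ring of Krull dimension 0, every element `a` satisfies `a^n (1 - a x) = 0`
for some `n` and `x`. -/
theorem dimZero_pow_eq (R : Type u) [CommRing R]
    (hdim : ∀ Q : Ideal R, Q.IsPrime → Q.IsMaximal) (a : R) :
    ∃ (n : ℕ) (x : R), a ^ n * (1 - a * x) = 0 := by
  by_contra h
  push_neg at h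
  set S : Submonoid R :=
    { carrier := {y | ∃ (n : ℕ) (x : R), y = a ^ n * (1 - a * x)}
      one_mem' := ⟨0, 0, by ring⟩
      mul_mem' := by
        rintro p q ⟨n, x, rfl⟩ ⟨m, w, rfl⟩
        exact ⟨n + m, x + w - a * x * w, by ring⟩ } with hS
  have hdisj : Disjoint ((⊥ : Ideal R) : Set R) (S : Set R) := by
    rw [Set.disjoint_left]
    rintro y hy ⟨n, x, rfl⟩
    simp only [SetLike.mem_coe, Ideal.mem_bot] at hy
    exact h n x hy
  obtain ⟨p, hp, -, hpS⟩ := Ideal.exists_le_prime_disjoint _ S hdisj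
  have hpmax : p.IsMaximal := hdim p hp
  have ha : a ∉ p := by
    intro hap
    exact Set.disjoint_left.mp hpS hap ⟨1, 0, by ring⟩
  obtain ⟨r, i, hi, hri⟩ := hpmax.exists_inv ha
  have : (1 - a * r) ∈ p := by
    have : 1 - a * r = i := by rw [← hri]; ring
    rw [this]; exact hi
  exact Set.disjoint_left.mp hpS this ⟨0, r, by ring⟩

/-- For `R` of Krull dimension 0, with `X = {P maximal | PR_P = 0}` and `A`
the kernel of `R → ∏_{P ∈ X} R_P`, the quotient `R/A` is von Neumann regular. -/
theorem quotient_kernel_vonNeumann_regular (R : Type u) [CommRing R]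
    (hdim : ∀ Q : Ideal R, Q.IsPrime → Q.IsMaximal)
    (X : Set (Ideal R))
    (hX : X = {P : Ideal R | P.IsMaximal ∧ ∀ a ∈ P, ∃ s ∉ P, s * a = 0})
    (A : Ideal R)
    (hA : ∀ r : R, r ∈ A ↔ ∀ P ∈ X, ∃ s ∉ P, s * r = 0) :
    ∀ a : R ⧸ A, ∃ x : R ⧸ A, a = a * a * x := by
  intro b
  obtain ⟨a, rfl⟩ := Ideal.Quotient.mk_surjective b
  obtain ⟨n, x, hnx⟩ := dimZero_pow_eq R hdim a
  refine ⟨Ideal.Quotient.mk A x, ?_⟩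
  rw [← map_mul, ← map_mul, Ideal.Quotient.eq]
  -- the element `c = a - a*a*x` is nilpotent
  set c : R := a - a * a * x with hc
  have hcpow : c ^ (n + 1) = 0 := by
    have h1 : c = a * (1 - a * x) := by rw [hc]; ring
    have h2 : c ^ (n + 1) = (a ^ n * (1 - a * x)) * (a * (1 - a * x) ^ n) := by
      rw [h1, mul_pow, pow_succ, pow_succ]; ring
    rw [h2, hnx, zero_mul]
  rw [hA]
  intro P hP
  rw [hX] at hP
  obtain ⟨hPmax, hPloc⟩ := hP
  have hPprime : P.IsPrime := hPmax.isPrime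
  have hcP : c ∈ P := hPprime.mem_of_pow_mem (n + 1) (by rw [hcpow]; exact P.zero_mem)
  exact hPloc c hcP
end

section
/- Let R be a commutative local ring with exactly one prime ideal P, and suppose R satisfies the descending chain condition on principal ideals. Then P² ≠ P unless P = 0. -/
universe u v

/-- If `R` is a commutative local ring whose unique prime ideal is its
maximal ideal `P`, and `R` has the DCC on principal ideals, then `P² = P` forces `P = 0`. -/
theorem maximalIdeal_sq_ne_self (R : Type u) [CommRing R] [IsLocalRing R]
    (hprime : ∀ Q : Ideal R, Q.IsPrime → Q = IsLocalRing.maximalIdeal R)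
    (hdcc : ∀ f : ℕ → R, (∀ n, Ideal.span {f (n + 1)} ≤ Ideal.span {f n}) →
      ∃ N, ∀ n, N ≤ n → Ideal.span {f n} = Ideal.span {f N})
    (hsq : IsLocalRing.maximalIdeal R ^ 2 = IsLocalRing.maximalIdeal R) :
    IsLocalRing.maximalIdeal R = ⊥ := by
  classical
  set P := IsLocalRing.maximalIdeal R with hPdef
  have hPP : P * P = P := by rw [← pow_two]; exact hsq
  by_contra hne
  set A : R → Prop := fun x => ∀ p ∈ P, x * p = 0 with hAdef
  have hA0 : A 0 := fun p _ => zero_mul p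
  have hex : ∃ x ∈ P, ¬ A x := by
    by_contra h
    push_neg at h
    apply hne
    have hle : P * P ≤ ⊥ := Ideal.mul_le.mpr fun a ha b hb => by
      rw [Ideal.mem_bot]; exact h a ha b hb
    rw [hPP] at hle
    exact le_bot_iff.mp hle
  have key : ∃ x, x ∈ P ∧ ¬ A x ∧ ∀ p ∈ P, A (p * x) := by
    by_contra h
    push_neg at h
    obtain ⟨x₀, hx₀P, hx₀A⟩ := hex
    have step : ∀ t : {x : R // x ∈ P ∧ ¬ A x}, ∃ s : {x : R // x ∈ P ∧ ¬ A x},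
        ∃ q : R, q ∈ P ∧ s.1 = q * t.1 := by
      rintro ⟨x, hxP, hxA⟩
      obtain ⟨q, hqP, hqA⟩ := h x hxP hxA
      exact ⟨⟨q * x, P.mul_mem_left q hxP, hqA⟩, q, hqP, rfl⟩
    choose g q hq hg using step
    set f : ℕ → {x : R // x ∈ P ∧ ¬ A x} := fun n => g^[n] ⟨x₀, hx₀P, hx₀A⟩ with hfdef
    have hf : ∀ n, (f (n+1)).1 = q (f n) * (f n).1 := by
      intro n
      have : f (n+1) = g (f n) := Function.iterate_succ_apply' g n _
      rw [this]; exact hg (f n)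
    obtain ⟨N, hN⟩ := hdcc (fun n => (f n).1) (fun n => by
      rw [Ideal.span_singleton_le_span_singleton]
      show (f n : R) ∣ (f (n+1) : R)
      rw [hf n]
      exact dvd_mul_left _ _)
    have h1 : Ideal.span {(f (N+1)).1} = Ideal.span {(f N).1} := hN (N+1) (Nat.le_succ N)
    have h2 : (f N).1 ∈ Ideal.span {(f (N+1)).1} := by
      rw [h1]; exact Ideal.mem_span_singleton_self _
    rw [Ideal.mem_span_singleton] at h2
    obtain ⟨c, hc⟩ := h2
    rw [hf N] at hc
    have hu : IsUnit (1 - q (f N) * c) := by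
      apply IsLocalRing.isUnit_one_sub_self_of_mem_nonunits
      exact (IsLocalRing.mem_maximalIdeal _).mp (P.mul_mem_right c (hq (f N)))
    have hz : (f N).1 * (1 - q (f N) * c) = 0 := by linear_combination hc
    have hz0 : (f N).1 = 0 := hu.mul_left_eq_zero.mp hz
    exact (f N).2.2 (hz0 ▸ hA0)
  obtain ⟨x, hxP, hxA, hx⟩ := key
  apply hxA
  intro r hr
  have hr2 : r ∈ P * P := hPP.symm ▸ hr
  refine Submodule.mul_induction_on hr2 (fun a ha b hb => ?_) (fun a b h1 h2 => ?_)
  · linear_combination hx a ha b hb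
  · rw [mul_add, h1, h2, add_zero]
end
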